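/- arXiv:1512.00732 — 6 statements merged into one kernel-verified Lean document; each statement's English description precedes it below -/
import Mathlib

section
/- Let Ψ : M_d(ℂ) → M_d(ℂ) be a positive linear map such that (id + Ψ)^{d−1} is positivity improving. Then for every t > 0 the map exp(tΨ) is positivity improving. -/
open scoped ComplexOrder Matrix Matrix.Norms.L2Operator

noncomputable section

abbrev Mat (d : ℕ) := Matrix (Fin d) (Fin d) ℂ

/-- A quantum state: positive semidefinite with unit trace. -/
def IsState {d : ℕ} (ρ : Mat d) : Prop := ρ.PosSemidef ∧ ρ.trace = 1

/-- The Lindblad generator `L(X) = -i[H,X] + Σⱼ (Cⱼ X Cⱼ* - ½(Cⱼ*Cⱼ X + X Cⱼ*Cⱼ))`. -/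
def lindblad {d m : ℕ} (H : Mat d) (C : Fin m → Mat d) : Mat d →ₗ[ℂ] Mat d :=
  (-Complex.I) • (LinearMap.mulLeft ℂ H - LinearMap.mulRight ℂ H)
  + ∑ j, ((LinearMap.mulLeft ℂ (C j)).comp (LinearMap.mulRight ℂ (C j)ᴴ)
      - (1/2 : ℂ) • (LinearMap.mulLeft ℂ ((C j)ᴴ * C j) + LinearMap.mulRight ℂ ((C j)ᴴ * C j)))

/-- The exponential of a linear endomorphism of matrix space, computed through its
matrix representation in the standard basis. -/
def expMap {d : ℕ} (f : Mat d →ₗ[ℂ] Mat d) : Mat d →ₗ[ℂ] Mat d :=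
  Matrix.toLin (Matrix.stdBasis ℂ (Fin d) (Fin d)) (Matrix.stdBasis ℂ (Fin d) (Fin d))
    (NormedSpace.exp
      (LinearMap.toMatrix (Matrix.stdBasis ℂ (Fin d) (Fin d)) (Matrix.stdBasis ℂ (Fin d) (Fin d)) f))

/-- The restricted generator `L_S` acting on the `S` block. -/
def lindbladS {d m : ℕ} (H : Mat d) (C : Fin m → Mat d) (Ps : Mat d) : Mat d →ₗ[ℂ] Mat d :=
  lindblad (Ps * H * Ps) (fun j => Ps * C j * Ps)

/-- The reduced generator `L_R` on the `R` block, including the `-½{C_{j,P}* C_{j,P}, ·}` terms. -/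
def lindbladR {d m : ℕ} (H : Mat d) (C : Fin m → Mat d) (Ps : Mat d) : Mat d →ₗ[ℂ] Mat d :=
  lindblad ((1 - Ps) * H * (1 - Ps)) (fun j => (1 - Ps) * C j * (1 - Ps))
  - (1/2 : ℂ) • ∑ j, (LinearMap.mulLeft ℂ ((Ps * C j * (1 - Ps))ᴴ * (Ps * C j * (1 - Ps)))
       + LinearMap.mulRight ℂ ((Ps * C j * (1 - Ps))ᴴ * (Ps * C j * (1 - Ps))))

/-- The invariance block condition: `P_R Cⱼ P_S = 0` for all `j` and
`i P_S H P_R - ½ Σⱼ C_{j,S}* C_{j,P} = 0`. -/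
def BlockInv {d m : ℕ} (H : Mat d) (C : Fin m → Mat d) (Ps : Mat d) : Prop :=
  (∀ j, (1 - Ps) * C j * Ps = 0) ∧
    Complex.I • (Ps * H * (1 - Ps))
      - (1/2 : ℂ) • ∑ j, (Ps * C j * Ps)ᴴ * (Ps * C j * (1 - Ps)) = 0

/-- `H_S` (the range of `Ps`) is invariant in mean. -/
def InvariantMean {d m : ℕ} (H : Mat d) (C : Fin m → Mat d) (Ps : Mat d) : Prop :=
  ∀ ρ₀ : Mat d, IsState ρ₀ → (Ps * ρ₀).trace = 1 →
    ∀ t : ℝ, 0 ≤ t → (Ps * expMap ((t : ℂ) • lindblad H C) ρ₀).trace = 1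

/-- `H_S` (the range of `Ps`) is globally asymptotically stable in mean:
`‖exp(tL)(ρ₀) - P_S exp(tL)(ρ₀) P_S‖ → 0` as `t → ∞`, for every state `ρ₀`. -/
def GASMean {d m : ℕ} (H : Mat d) (C : Fin m → Mat d) (Ps : Mat d) : Prop :=
  ∀ ρ₀ : Mat d, IsState ρ₀ →
    Filter.Tendsto
      (fun t : ℝ =>
        ‖expMap ((t : ℂ) • lindblad H C) ρ₀ - Ps * expMap ((t : ℂ) • lindblad H C) ρ₀ * Ps‖)
      Filter.atTop (nhds 0)

/-- `α₀`: the minimum of `-Re λ` over the eigenvalues `λ` of the restriction of `L_R` to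
`V_R = {X : X = P_R X P_R}`. -/
def alpha0 {d m : ℕ} (H : Mat d) (C : Fin m → Mat d) (Ps : Mat d) : ℝ :=
  sInf {x : ℝ | ∃ (lam : ℂ) (X : Mat d), X ≠ 0 ∧ (1 - Ps) * X * (1 - Ps) = X ∧
    lindbladR H C Ps X = lam • X ∧ x = -lam.re}

/-- A linear map on matrices is positivity improving if `⟨ψ, Φ(φφ*) ψ⟩ > 0` (a strictly
positive real number) for all nonzero vectors `φ, ψ`. -/
def PosImproving {d : ℕ} (Φ : Mat d →ₗ[ℂ] Mat d) : Prop :=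
  ∀ φ ψ : Fin d → ℂ, φ ≠ 0 → ψ ≠ 0 →
    0 < star ψ ⬝ᵥ ((Φ (Matrix.vecMulVec φ (star φ))) *ᵥ ψ)

/-- `r_j(ρ) = tr[(C_j + C_j*) ρ]` (a real number). -/
def rVal {d m : ℕ} (C : Fin m → Mat d) (j : Fin m) (ρ : Mat d) : ℝ :=
  (((C j + (C j)ᴴ) * ρ).trace).re

/-- `v_j(ρ) = tr[C_j ρ C_j*]` (a real number). -/
def vVal {d m : ℕ} (C : Fin m → Mat d) (j : Fin m) (ρ : Mat d) : ℝ :=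
  ((C j * ρ * (C j)ᴴ).trace).re

/-- `r_{j,S}(ρ_S) = tr[(C_{j,S} + C_{j,S}*) ρ_S]`. -/
def rValS {d m : ℕ} (C : Fin m → Mat d) (Ps : Mat d) (j : Fin m) (ρS : Mat d) : ℝ :=
  (((Ps * C j * Ps + (Ps * C j * Ps)ᴴ) * ρS).trace).re

/-- `r_{j,R}(ρ_R) = tr[(C_{j,R} + C_{j,R}*) ρ_R]`. -/
def rValR {d m : ℕ} (C : Fin m → Mat d) (Ps : Mat d) (j : Fin m) (ρR : Mat d) : ℝ :=
  ((((1 - Ps) * C j * (1 - Ps) + ((1 - Ps) * C j * (1 - Ps))ᴴ) * ρR).trace).re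

/-- `v_{j,S}(ρ_S) = tr[C_{j,S}* C_{j,S} ρ_S]`. -/
def vValS {d m : ℕ} (C : Fin m → Mat d) (Ps : Mat d) (j : Fin m) (ρS : Mat d) : ℝ :=
  ((((Ps * C j * Ps)ᴴ * (Ps * C j * Ps)) * ρS).trace).re

/-- `v_{j,R}(ρ_R) = tr[C_{j,R}* C_{j,R} ρ_R]`. -/
def vValR {d m : ℕ} (C : Fin m → Mat d) (Ps : Mat d) (j : Fin m) (ρR : Mat d) : ℝ :=
  (((((1 - Ps) * C j * (1 - Ps))ᴴ * ((1 - Ps) * C j * (1 - Ps))) * ρR).trace).re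

/-- The function `α(ρ, ρ_R)`; indices `j < p` are diffusive, indices `p ≤ j` are jump indices.
The convention `0 · ln 0 = 0` is automatic since `Real.log 0 = 0` in Lean. -/
def alphaFun {d m : ℕ} (C : Fin m → Mat d) (p : ℕ) (Ps : Mat d) (ρ ρR : Mat d) : ℝ :=
  (1/2) * ∑ j ∈ Finset.filter (fun j : Fin m => (j : ℕ) < p) Finset.univ,
      (rVal C j ρ - rValR C Ps j ρR) ^ 2
  + ∑ j ∈ Finset.filter (fun j : Fin m => p ≤ (j : ℕ)) Finset.univ,
      (vValR C Ps j ρR - vVal C j ρ + vVal C j ρ * Real.log (vVal C j ρ / vValR C Ps j ρR))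

/-- `α₁`: the infimum of `α(ρ, ρ_R)` over states `ρ` with `tr(P_S ρ) = 1` and states `ρ_R`
supported on `H_R`. -/
def alpha1 {d m : ℕ} (C : Fin m → Mat d) (p : ℕ) (Ps : Mat d) : ℝ :=
  sInf {a : ℝ | ∃ ρ ρR : Mat d, IsState ρ ∧ (Ps * ρ).trace = 1 ∧ IsState ρR ∧
    (1 - Ps) * ρR * (1 - Ps) = ρR ∧ a = alphaFun C p Ps ρ ρR}

/-- Assumption (SP): `⟨x, C_{j,R}* C_{j,R} x⟩ > 0` for every jump index `j` and every nonzero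
`x` in the range of `P_R`. -/
def AssumpSP {d m : ℕ} (C : Fin m → Mat d) (p : ℕ) (Ps : Mat d) : Prop :=
  ∀ j : Fin m, p ≤ (j : ℕ) → ∀ x : Fin d → ℂ, x ≠ 0 → (1 - Ps) *ᵥ x = x →
    0 < star x ⬝ᵥ (((((1 - Ps) * C j * (1 - Ps))ᴴ * ((1 - Ps) * C j * (1 - Ps)))) *ᵥ x)

/-- Assumption (ND): every state supported on `H_S` and every state supported on `H_R`
are distinguished by some measurement record expectation. -/
def AssumpND {d m : ℕ} (C : Fin m → Mat d) (p : ℕ) (Ps : Mat d) : Prop :=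
  ∀ ρS ρR : Mat d, IsState ρS → Ps * ρS * Ps = ρS → IsState ρR → (1 - Ps) * ρR * (1 - Ps) = ρR →
    ∃ j : Fin m, ((j : ℕ) < p ∧ rValS C Ps j ρS ≠ rValR C Ps j ρR) ∨
                 (p ≤ (j : ℕ) ∧ vValS C Ps j ρS ≠ vValR C Ps j ρR)


lemma aux_pow_psd {d : ℕ} (Ψ : Mat d →ₗ[ℂ] Mat d)
    (hΨpos : ∀ X : Mat d, X.PosSemidef → (Ψ X).PosSemidef) :
    ∀ (n : ℕ) (X : Mat d), X.PosSemidef → ((Ψ ^ n : Module.End ℂ (Mat d)) X).PosSemidef := by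
  intro n
  induction n with
  | zero => intro X hX; simpa using hX
  | succ n ih =>
      intro X hX
      rw [pow_succ]
      exact ih _ (hΨpos X hX)

/-- If `Ψ` is a positive map with `(id + Ψ)^(d-1)` positivity improving, then
`exp(tΨ)` is positivity improving for every `t > 0`. -/
theorem stmt6 {d : ℕ} (hd : 1 ≤ d) (Ψ : Mat d →ₗ[ℂ] Mat d)
    (hΨpos : ∀ X : Mat d, X.PosSemidef → (Ψ X).PosSemidef)
    (hΨimp : PosImproving
      (((LinearMap.id + Ψ : Module.End ℂ (Mat d)) ^ (d - 1) : Mat d →ₗ[ℂ] Mat d))) :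
    ∀ t : ℝ, 0 < t → PosImproving (expMap ((t : ℂ) • Ψ)) := by
  intro t ht φ ψ hφ hψ
  classical
  set b := Matrix.stdBasis ℂ (Fin d) (Fin d) with hb
  set X := Matrix.vecMulVec φ (star φ) with hXdef
  have hX : X.PosSemidef := by
    rw [hXdef, Matrix.vecMulVec_eq (Fin 1), ← Matrix.conjTranspose_replicateCol]
    exact Matrix.posSemidef_self_mul_conjTranspose _
  let S : Mat d →ₗ[ℂ] ℂ :=
    { toFun := fun Y => star ψ ⬝ᵥ (Y *ᵥ ψ)
      map_add' := fun Y Z => by simp [Matrix.add_mulVec, dotProduct_add]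
      map_smul' := fun c Y => by
        simp [Matrix.smul_mulVec, dotProduct_smul] }
  set q : ℕ → ℂ := fun n => S ((Ψ ^ n : Module.End ℂ (Mat d)) X) with hqdef
  have hqnn : ∀ n, 0 ≤ q n := fun n => (aux_pow_psd Ψ hΨpos n X hX).dotProduct_mulVec_nonneg ψ
  -- some q k is strictly positive
  obtain ⟨k, hk⟩ : ∃ k, 0 < q k := by
    by_contra hcon
    push_neg at hcon
    have hq0 : ∀ n, q n = 0 := fun n => ((hqnn n).lt_or_eq.resolve_left (hcon n)).symm
    have himp := hΨimp φ ψ hφ hψ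
    rw [← hXdef] at himp
    have h2 : ((LinearMap.id + Ψ : Module.End ℂ (Mat d)) ^ (d - 1))
        = ∑ m ∈ Finset.range d, (((d-1).choose m : ℂ)) • (Ψ ^ m : Module.End ℂ (Mat d)) := by
      have h1 : (LinearMap.id + Ψ : Module.End ℂ (Mat d)) = Ψ + 1 := by
        rw [add_comm]; rfl
      rw [h1, (Commute.one_right (Ψ : Module.End ℂ (Mat d))).add_pow,
        Nat.sub_add_cancel hd]
      refine Finset.sum_congr rfl fun m _ => ?_
      rw [one_pow, mul_one,
        ← (Nat.cast_commute ((d-1).choose m) ((Ψ : Module.End ℂ (Mat d)) ^ m)).eq,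
        ← nsmul_eq_mul, ← Nat.cast_smul_eq_nsmul ℂ]
    have hsum0 : star ψ ⬝ᵥ ((((LinearMap.id + Ψ : Module.End ℂ (Mat d)) ^ (d - 1))) X *ᵥ ψ)
        = ∑ m ∈ Finset.range d, ((d-1).choose m : ℂ) * q m := by
      rw [h2]
      simp only [LinearMap.sum_apply, LinearMap.smul_apply]
      show S (∑ m ∈ Finset.range d, ((d-1).choose m : ℂ) • ((Ψ ^ m : Module.End ℂ (Mat d)) X)) = _
      rw [map_sum]
      exact Finset.sum_congr rfl fun m _ => by rw [map_smul, smul_eq_mul]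
    rw [hsum0] at himp
    have : ∀ m ∈ Finset.range d, ((d-1).choose m : ℂ) * q m = 0 := fun m _ => by
      rw [hq0 m, mul_zero]
    rw [Finset.sum_eq_zero this] at himp
    exact lt_irrefl _ himp
  -- the linear functional on big matrices
  set M := LinearMap.toMatrix b b Ψ with hM
  have htoLinpow : ∀ n, Matrix.toLin b b (M ^ n) = (Ψ ^ n : Module.End ℂ (Mat d)) := by
    intro n
    induction n with
    | zero => simp [Matrix.toLin_one]; rfl
    | succ n ih =>
        rw [pow_succ, pow_succ, Matrix.toLin_mul b b b, ih, hM, Matrix.toLin_toMatrix]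
        rfl
  let T₀ : Matrix (Fin d × Fin d) (Fin d × Fin d) ℂ →ₗ[ℂ] ℂ :=
    { toFun := fun A => S ((Matrix.toLin b b A) X)
      map_add' := fun A B => by simp [map_add, LinearMap.add_apply]
      map_smul' := fun c A => by simp [map_smul, LinearMap.smul_apply] }
  let T : Matrix (Fin d × Fin d) (Fin d × Fin d) ℂ →L[ℂ] ℂ := T₀.toContinuousLinearMap
  set a : ℕ → Matrix (Fin d × Fin d) (Fin d × Fin d) ℂ :=
    fun n => (n.factorial : ℂ)⁻¹ • ((t:ℂ)^n • M ^ n) with ha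
  have hsumM : Summable a := by
    have := NormedSpace.expSeries_summable' (𝕂 := ℂ) ((t:ℂ) • M)
    simpa only [ha, smul_pow] using this
  have hexp_eq : NormedSpace.exp ((t:ℂ) • M) = ∑' n, a n := by
    rw [NormedSpace.exp_eq_tsum ℂ]
    refine tsum_congr fun n => ?_
    rw [ha]
    simp only [smul_pow]
  have key : star ψ ⬝ᵥ (expMap ((t:ℂ) • Ψ) X *ᵥ ψ)
      = T (NormedSpace.exp ((t:ℂ) • M)) := by
    have hMexp : LinearMap.toMatrix b b ((t:ℂ) • Ψ) = (t:ℂ) • M := by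
      rw [hM]; exact map_smul _ _ _
    simp only [expMap, ← hb, hMexp]
    rfl
  have hTa : ∀ n, T (a n) = (n.factorial : ℂ)⁻¹ * ((t:ℂ)^n * q n) := by
    intro n
    rw [ha]
    simp only [map_smul, smul_eq_mul]
    congr 2
    show S ((Matrix.toLin b b (M ^ n)) X) = q n
    rw [htoLinpow n]
  have hterm : ∀ n, T (a n) = (((n.factorial : ℝ)⁻¹ * t^n : ℝ) : ℂ) * q n := by
    intro n; rw [hTa n]; push_cast; ring
  rw [key, hexp_eq, T.map_tsum hsumM]
  have hsumT : Summable fun n => T (a n) := hsumM.map T.toLinearMap.toAddMonoidHom T.continuous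
  refine Summable.tsum_pos hsumT (fun n => ?_) k ?_
  · rw [hterm n]
    refine mul_nonneg ?_ (hqnn n)
    rw [Complex.le_def, Complex.zero_re, Complex.zero_im, Complex.ofReal_re, Complex.ofReal_im]
    constructor
    · positivity
    · rfl
  · rw [hterm k]
    refine mul_pos ?_ hk
    rw [Complex.lt_def, Complex.zero_re, Complex.zero_im, Complex.ofReal_re, Complex.ofReal_im]
    constructor
    · positivity
    · rfl

end
end

section
/- For every t ≥ 0 the map exp(tL_S) maps positive semidefinite matrices to positive semidefinite matrices and preserves the trace: tr(exp(tL_S)(X)) = tr(X) for every X ∈ M_d(ℂ). -/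
open scoped ComplexOrder Matrix Matrix.Norms.L2Operator

noncomputable section

open NormedSpace
open scoped Nat
set_option maxHeartbeats 1000000

variable {𝔸 : Type*} [NormedRing 𝔸] [NormedAlgebra ℂ 𝔸] [CompleteSpace 𝔸] [NormOneClass 𝔸]

lemma my_norm_exp_le (x : 𝔸) : ‖exp x‖ ≤ Real.exp ‖x‖ := by
  rw [exp_eq_tsum ℂ]
  refine (norm_tsum_le_tsum_norm (norm_expSeries_summable' (𝕂 := ℂ) x)).trans ?_
  rw [Real.exp_eq_exp_ℝ, exp_eq_tsum ℝ]
  refine Summable.tsum_le_tsum (fun n => ?_) (norm_expSeries_summable' (𝕂 := ℂ) x)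
    (expSeries_summable' (𝕂 := ℝ) ‖x‖)
  rw [norm_smul, smul_eq_mul]
  gcongr
  · simp
  · exact norm_pow_le x n

lemma my_exp_remainder (x : 𝔸) : ‖exp x - 1 - x‖ ≤ ‖x‖ ^ 2 * Real.exp ‖x‖ := by
  have hs := expSeries_summable' (𝕂 := ℂ) x
  have hs1 : Summable (fun n : ℕ => ((n + 1)!⁻¹ : ℂ) • x ^ (n + 1)) :=
    (summable_nat_add_iff 1).mpr hs
  have hs2 : Summable (fun n : ℕ => ((n + 1 + 1)!⁻¹ : ℂ) • x ^ (n + 1 + 1)) :=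
    (summable_nat_add_iff 1).mpr hs1
  have h0 : exp x - 1 - x = ∑' n : ℕ, ((n + 1 + 1)!⁻¹ : ℂ) • x ^ (n + 1 + 1) := by
    simp only [exp_eq_tsum ℂ]
    rw [Summable.tsum_eq_zero_add hs, Summable.tsum_eq_zero_add hs1]
    simp [Nat.factorial]
  rw [h0]
  have hnorm : ∀ n : ℕ, ‖((n + 1 + 1)!⁻¹ : ℂ) • x ^ (n + 1 + 1)‖ ≤
      ‖x‖ ^ 2 * ((n !⁻¹ : ℝ) • ‖x‖ ^ n) := by
    intro n
    rw [norm_smul, smul_eq_mul]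
    have h1 : ‖((n + 1 + 1)!⁻¹ : ℂ)‖ ≤ (n !⁻¹ : ℝ) := by
      rw [norm_inv]
      simp only [Complex.norm_natCast]
      exact inv_anti₀ (by positivity) (by exact_mod_cast Nat.factorial_le (by omega))
    have h2 : ‖x ^ (n + 1 + 1)‖ ≤ ‖x‖ ^ (n + 1 + 1) := norm_pow_le x _
    calc ‖((n + 1 + 1)!⁻¹ : ℂ)‖ * ‖x ^ (n + 1 + 1)‖ ≤ (n !⁻¹ : ℝ) * ‖x‖ ^ (n + 1 + 1) := by
          gcongr
      _ = ‖x‖ ^ 2 * ((n !⁻¹ : ℝ) * ‖x‖ ^ n) := by ring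
  refine (norm_tsum_le_tsum_norm ?_).trans ?_
  · exact (summable_nat_add_iff 2).mpr (norm_expSeries_summable' (𝕂 := ℂ) x)
  · have hsum : Summable (fun n : ℕ => ‖x‖ ^ 2 * ((n !⁻¹ : ℝ) • ‖x‖ ^ n)) :=
      (expSeries_summable' (𝕂 := ℝ) ‖x‖).mul_left _
    refine (Summable.tsum_le_tsum hnorm ((summable_nat_add_iff 2).mpr
      (norm_expSeries_summable' (𝕂 := ℂ) x)) hsum).trans ?_
    rw [tsum_mul_left, Real.exp_eq_exp_ℝ, exp_eq_tsum ℝ]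

lemma my_pow_diff (s t : 𝔸) (M : ℝ) (hM0 : 0 ≤ M) (hs : ‖s‖ ≤ M) (ht : ‖t‖ ≤ M) (n : ℕ) :
    ‖s ^ n - t ^ n‖ ≤ n * M ^ (n - 1) * ‖s - t‖ := by
  induction n with
  | zero => simp
  | succ n ih =>
    have key : s ^ (n + 1) - t ^ (n + 1) = s * (s ^ n - t ^ n) + (s - t) * t ^ n := by
      rw [pow_succ', pow_succ']
      noncomm_ring
    rw [key]
    have h1 : ‖s * (s ^ n - t ^ n)‖ ≤ M * (n * M ^ (n - 1) * ‖s - t‖) := by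
      refine (norm_mul_le _ _).trans ?_
      exact mul_le_mul hs ih (norm_nonneg _) hM0
    have h2 : ‖(s - t) * t ^ n‖ ≤ ‖s - t‖ * M ^ n := by
      refine (norm_mul_le _ _).trans ?_
      exact mul_le_mul_of_nonneg_left ((norm_pow_le t n).trans (pow_le_pow_left₀ (norm_nonneg _) ht n)) (norm_nonneg _)
    refine (norm_add_le _ _).trans ((add_le_add h1 h2).trans ?_)
    have hMpow : M * (↑n * M ^ (n - 1) * ‖s - t‖) ≤ ↑n * M ^ n * ‖s - t‖ := by
      rcases n with - | k
      · simp
      · have : M * ((k+1 : ℕ) * M ^ (k + 1 - 1) * ‖s - t‖) = (k+1 : ℕ) * M ^ (k + 1) * ‖s - t‖ := by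
          simp only [Nat.add_sub_cancel]
          ring
        rw [this]
    calc M * (↑n * M ^ (n - 1) * ‖s - t‖) + ‖s - t‖ * M ^ n
        ≤ ↑n * M ^ n * ‖s - t‖ + ‖s - t‖ * M ^ n := by gcongr
      _ = (↑(n + 1) : ℝ) * M ^ (n + 1 - 1) * ‖s - t‖ := by
          simp only [Nat.add_sub_cancel]
          push_cast
          ring

lemma my_exp_prod_sub_exp_add (a b : 𝔸) :
    ‖exp a * exp b - exp (a + b)‖ ≤
      (‖a‖ + ‖b‖) ^ 2 * (2 * Real.exp (‖a‖ + ‖b‖) + 1 +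
        (‖a‖ + ‖b‖) * Real.exp (‖a‖ + ‖b‖) + Real.exp (2 * (‖a‖ + ‖b‖))) := by
  set u := exp a - 1 - a with hu
  set v := exp b - 1 - b with hv
  set w := exp (a + b) - 1 - (a + b) with hw
  have key : exp a * exp b - exp (a + b) = v + a * b + a * v + u * exp b - w := by
    have ha : exp a = 1 + a + u := by rw [hu]; abel
    have hb : exp b = 1 + b + v := by rw [hv]; abel
    have hab : exp (a + b) = 1 + (a + b) + w := by rw [hw]; abel
    calc exp a * exp b - exp (a + b)
        = (1 + a + u) * exp b - (1 + (a + b) + w) := by rw [← ha, ← hab]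
      _ = exp b + a * exp b + u * exp b - (1 + (a + b) + w) := by noncomm_ring
      _ = (1 + b + v) + a * (1 + b + v) + u * exp b - (1 + (a + b) + w) := by rw [← hb]
      _ = v + a * b + a * v + u * exp b - w := by noncomm_ring
  rw [key]
  set r := ‖a‖ + ‖b‖ with hr
  have hr0 : 0 ≤ r := by positivity
  have hra : ‖a‖ ≤ r := by rw [hr]; linarith [norm_nonneg b]
  have hrb : ‖b‖ ≤ r := by rw [hr]; linarith [norm_nonneg a]
  have hub : ‖u‖ ≤ ‖a‖ ^ 2 * Real.exp ‖a‖ := my_exp_remainder a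
  have hvb : ‖v‖ ≤ ‖b‖ ^ 2 * Real.exp ‖b‖ := my_exp_remainder b
  have hwb : ‖w‖ ≤ ‖a + b‖ ^ 2 * Real.exp ‖a + b‖ := my_exp_remainder (a + b)
  have hab : ‖a + b‖ ≤ r := norm_add_le a b
  have hexpb : ‖exp b‖ ≤ Real.exp r := (my_norm_exp_le b).trans (Real.exp_le_exp.mpr hrb)
  have hv2 : ‖v‖ ≤ r ^ 2 * Real.exp r := by
    refine hvb.trans ?_
    gcongr <;> first | assumption | positivity
  have hw2 : ‖w‖ ≤ r ^ 2 * Real.exp r := by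
    refine hwb.trans ?_
    gcongr <;> first | assumption | positivity
  have hu2 : ‖u‖ ≤ r ^ 2 * Real.exp r := by
    refine hub.trans ?_
    gcongr <;> first | assumption | positivity
  have h1 : ‖v + a * b + a * v + u * exp b - w‖ ≤
      ‖v‖ + ‖a‖ * ‖b‖ + ‖a‖ * ‖v‖ + ‖u‖ * ‖exp b‖ + ‖w‖ := by
    calc ‖v + a * b + a * v + u * exp b - w‖
        ≤ ‖v + a * b + a * v + u * exp b‖ + ‖w‖ := norm_sub_le _ _
      _ ≤ ‖v + a * b + a * v‖ + ‖u * exp b‖ + ‖w‖ := by gcongr; exact norm_add_le _ _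
      _ ≤ ‖v + a * b‖ + ‖a * v‖ + ‖u * exp b‖ + ‖w‖ := by gcongr; exact norm_add_le _ _
      _ ≤ ‖v‖ + ‖a * b‖ + ‖a * v‖ + ‖u * exp b‖ + ‖w‖ := by gcongr; exact norm_add_le _ _
      _ ≤ ‖v‖ + ‖a‖ * ‖b‖ + ‖a‖ * ‖v‖ + ‖u‖ * ‖exp b‖ + ‖w‖ := by
          gcongr <;> exact norm_mul_le _ _
  refine h1.trans ?_
  have e1 : ‖a‖ * ‖b‖ ≤ r ^ 2 := by nlinarith [norm_nonneg a, norm_nonneg b]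
  have e2 : ‖a‖ * ‖v‖ ≤ r * (r ^ 2 * Real.exp r) :=
    mul_le_mul hra hv2 (norm_nonneg _) hr0
  have e3 : ‖u‖ * ‖exp b‖ ≤ r ^ 2 * Real.exp r * Real.exp r :=
    mul_le_mul hu2 hexpb (norm_nonneg _) (by positivity)
  have e4 : Real.exp r * Real.exp r = Real.exp (2 * r) := by
    rw [← Real.exp_add]; ring_nf
  nlinarith [Real.exp_pos r, Real.exp_pos (2 * r), sq_nonneg r, hv2, hw2,
    mul_le_mul_of_nonneg_left hra (mul_nonneg (mul_nonneg hr0 hr0) (Real.exp_pos r).le)]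

theorem my_trotter (A B : 𝔸) :
    Filter.Tendsto (fun n : ℕ => (exp ((n : ℂ)⁻¹ • A) * exp ((n : ℂ)⁻¹ • B)) ^ n)
      Filter.atTop (nhds (exp (A + B))) := by
  set R := ‖A‖ + ‖B‖ with hR
  have hR0 : 0 ≤ R := by positivity
  set Cst := 2 * Real.exp R + 1 + R * Real.exp R + Real.exp (2 * R) with hCst
  have hCst0 : 0 ≤ Cst := by positivity
  rw [tendsto_iff_norm_sub_tendsto_zero]
  have key : ∀ n : ℕ, 1 ≤ n →
      ‖(exp ((n : ℂ)⁻¹ • A) * exp ((n : ℂ)⁻¹ • B)) ^ n - exp (A + B)‖ ≤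
        Real.exp R * (R ^ 2 * Cst) / n := by
    intro n hn
    have hn0 : (n : ℝ) ≠ 0 := by positivity
    have hnC : (n : ℂ) ≠ 0 := by exact Nat.cast_ne_zero.mpr (by omega)
    set a := (n : ℂ)⁻¹ • A with ha
    set b := (n : ℂ)⁻¹ • B with hb
    have hna : ‖a‖ = ‖A‖ / n := by
      rw [ha, norm_smul, norm_inv, Complex.norm_natCast, div_eq_inv_mul]
    have hnb : ‖b‖ = ‖B‖ / n := by
      rw [hb, norm_smul, norm_inv, Complex.norm_natCast, div_eq_inv_mul]
    have hr : ‖a‖ + ‖b‖ = R / n := by rw [hna, hnb, hR]; ring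
    have hrR : R / n ≤ R := by
      rw [div_le_iff₀ (by positivity)]
      nlinarith [(Nat.one_le_cast (α := ℝ)).mpr hn]
    have hrn0 : 0 ≤ R / n := by positivity
    -- t ^ n = exp (A + B)
    have htpow : exp (a + b) ^ n = exp (A + B) := by
      letI : NormedAlgebra ℚ 𝔸 := NormedAlgebra.restrictScalars ℚ ℂ 𝔸
      rw [← exp_nsmul]
      congr 1
      rw [ha, hb, ← smul_add, ← Nat.cast_smul_eq_nsmul ℂ, smul_smul,
        mul_inv_cancel₀ hnC, one_smul]
    -- step 1 : single-step error
    have hstep : ‖exp a * exp b - exp (a + b)‖ ≤ (R / n) ^ 2 * Cst := by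
      refine (my_exp_prod_sub_exp_add a b).trans ?_
      rw [hr]
      have hterm : 2 * Real.exp (R / n) + 1 + (R / n) * Real.exp (R / n)
          + Real.exp (2 * (R / n)) ≤ Cst := by
        rw [hCst]
        gcongr <;> first | exact hrR | exact Real.exp_le_exp.mpr hrR |
          exact Real.exp_le_exp.mpr (by linarith) | positivity
      exact mul_le_mul_of_nonneg_left hterm (by positivity)
    -- step 2 : norms of the factors
    have hM1 : (1 : ℝ) ≤ Real.exp (R / n) := Real.one_le_exp hrn0
    have hMs : ‖exp a * exp b‖ ≤ Real.exp (R / n) := by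
      refine (norm_mul_le _ _).trans ?_
      have := mul_le_mul (my_norm_exp_le a) (my_norm_exp_le b) (norm_nonneg _)
        (Real.exp_pos _).le
      refine this.trans ?_
      rw [← Real.exp_add, ← hr]
    have hMt : ‖exp (a + b)‖ ≤ Real.exp (R / n) := by
      refine (my_norm_exp_le _).trans (Real.exp_le_exp.mpr ?_)
      rw [← hr]; exact norm_add_le a b
    have hpowM : Real.exp (R / n) ^ (n - 1) ≤ Real.exp R := by
      calc Real.exp (R / n) ^ (n - 1) ≤ Real.exp (R / n) ^ n :=
            pow_le_pow_right₀ hM1 (Nat.sub_le n 1)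
        _ = Real.exp (R / n * n) := by rw [← Real.exp_nat_mul]; ring_nf
        _ = Real.exp R := by rw [div_mul_cancel₀ _ hn0]
    calc ‖(exp a * exp b) ^ n - exp (A + B)‖
        = ‖(exp a * exp b) ^ n - exp (a + b) ^ n‖ := by rw [htpow]
      _ ≤ n * Real.exp (R / n) ^ (n - 1) * ‖exp a * exp b - exp (a + b)‖ :=
          my_pow_diff _ _ _ (Real.exp_pos _).le hMs hMt n
      _ ≤ n * Real.exp R * ((R / n) ^ 2 * Cst) := by
          gcongr
      _ = Real.exp R * (R ^ 2 * Cst) / n * (1 : ℝ) := by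
          field_simp
      _ = Real.exp R * (R ^ 2 * Cst) / n := by ring
  have h0 : Filter.Tendsto (fun n : ℕ => Real.exp R * (R ^ 2 * Cst) / n)
      Filter.atTop (nhds 0) := tendsto_const_div_atTop_nhds_zero_nat _
  refine squeeze_zero' (Filter.Eventually.of_forall fun n => norm_nonneg _) ?_ h0
  exact Filter.eventually_atTop.mpr ⟨1, key⟩

-- ===================== matrix-side machinery =====================

namespace CPTPAux

open NormedSpace

variable {d : ℕ}

/-- Shorthand for the standard basis of `Mat d`. -/
noncomputable def bS (d : ℕ) := Matrix.stdBasis ℂ (Fin d) (Fin d)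

abbrev MatN (d : ℕ) := Matrix (Fin d × Fin d) (Fin d × Fin d) ℂ

noncomputable def toM (f : Mat d →ₗ[ℂ] Mat d) : MatN d := LinearMap.toMatrix (bS d) (bS d) f

noncomputable def ofM (M : MatN d) : Mat d →ₗ[ℂ] Mat d := Matrix.toLin (bS d) (bS d) M

lemma expMap_eq (f : Mat d →ₗ[ℂ] Mat d) : expMap f = ofM (exp (toM f)) := rfl

lemma ofM_toM (f : Mat d →ₗ[ℂ] Mat d) : ofM (toM f) = f := Matrix.toLin_toMatrix _ _ f

lemma ofM_mul (M M' : MatN d) : ofM (M * M') = (ofM M).comp (ofM M') := Matrix.toLin_mul _ _ _ _ _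

lemma ofM_pow (M : MatN d) (n : ℕ) : ofM (M ^ n) = (ofM M) ^ n := by
  induction n with
  | zero => simp [ofM, pow_zero, Matrix.toLin_one, Module.End.one_eq_id]
  | succ n ih => rw [pow_succ, pow_succ, ofM_mul, ih, Module.End.mul_eq_comp]

lemma toM_mul (f g : Mat d →ₗ[ℂ] Mat d) : toM (f * g) = toM f * toM g := by
  rw [Module.End.mul_eq_comp, toM, LinearMap.toMatrix_comp (bS d) (bS d) (bS d)]; rfl

lemma toM_pow (f : Mat d →ₗ[ℂ] Mat d) (n : ℕ) : toM (f ^ n) = (toM f) ^ n := by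
  induction n with
  | zero => simp [pow_zero, toM, Module.End.one_eq_id, LinearMap.toMatrix_id]
  | succ n ih => rw [pow_succ, pow_succ, toM_mul, ih]

/-- Evaluation of `ofM` at a fixed matrix, as a continuous linear map. -/
noncomputable def evalCLM (X : Mat d) : MatN d →L[ℂ] Mat d :=
  LinearMap.toContinuousLinearMap
    { toFun := fun M => ofM M X
      map_add' := by intro M M'; simp [ofM, map_add, LinearMap.add_apply]
      map_smul' := by intro c M; simp [ofM, map_smul, LinearMap.smul_apply] }

@[simp] lemma evalCLM_apply (X : Mat d) (M : MatN d) : evalCLM X M = ofM M X := rfl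

/-- The exponential of a linear endomorphism, applied to a matrix, as a convergent series. -/
lemma expMap_hasSum (f : Mat d →ₗ[ℂ] Mat d) (X : Mat d) :
    HasSum (fun n : ℕ => (n !⁻¹ : ℂ) • ((f ^ n) X)) (expMap f X) := by
  have h := exp_series_hasSum_exp' (𝕂 := ℂ) (toM f)
  have h2 := (evalCLM X).hasSum h
  simp only [evalCLM_apply, map_smul, LinearMap.smul_apply] at h2 ⊢
  rw [expMap_eq]
  convert h2 using 2 with n
  rw [ofM_pow, ofM_toM]

/-- Commuting `exp` with a linear map that intertwines powers. -/
lemma exp_toM_comm (ψ : Mat d →ₗ[ℂ] MatN d) (W : Mat d)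
    (h : ∀ n : ℕ, ψ (W ^ n) = (ψ W) ^ n) :
    exp (ψ W) = ψ (exp W) := by
  rw [exp_eq_tsum ℂ, exp_eq_tsum ℂ]
  have hsum := expSeries_summable' (𝕂 := ℂ) W
  have h1 : ∀ n : ℕ, (n !⁻¹ : ℂ) • (ψ W) ^ n = ψ.toContinuousLinearMap ((n !⁻¹ : ℂ) • W ^ n) := by
    intro n
    rw [map_smul, ← h n]
    rfl
  calc (∑' n : ℕ, (n !⁻¹ : ℂ) • (ψ W) ^ n)
      = ∑' n : ℕ, ψ.toContinuousLinearMap ((n !⁻¹ : ℂ) • W ^ n) := tsum_congr h1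
    _ = ψ.toContinuousLinearMap (∑' n : ℕ, (n !⁻¹ : ℂ) • W ^ n) :=
        (ψ.toContinuousLinearMap.map_tsum hsum).symm
    _ = ψ (∑' n : ℕ, (n !⁻¹ : ℂ) • W ^ n) := rfl

/-- `mulLeft` as a linear map in its argument, composed with `toM`. -/
noncomputable def psiL : Mat d →ₗ[ℂ] MatN d where
  toFun W := toM (LinearMap.mulLeft ℂ W)
  map_add' W V := by
    have h : LinearMap.mulLeft ℂ (W + V) = LinearMap.mulLeft ℂ W + LinearMap.mulLeft ℂ V := by
      ext X; simp [add_mul]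
    unfold toM; rw [h, map_add]
  map_smul' c W := by
    have h : LinearMap.mulLeft ℂ (c • W) = c • LinearMap.mulLeft ℂ W := by
      ext X; simp [smul_mul_assoc]
    unfold toM; rw [RingHom.id_apply, h, map_smul]

noncomputable def psiR : Mat d →ₗ[ℂ] MatN d where
  toFun W := toM (LinearMap.mulRight ℂ W)
  map_add' W V := by
    have h : LinearMap.mulRight ℂ (W + V) = LinearMap.mulRight ℂ W + LinearMap.mulRight ℂ V := by
      ext X; simp [mul_add]
    unfold toM; rw [h, map_add]
  map_smul' c W := by
    have h : LinearMap.mulRight ℂ (c • W) = c • LinearMap.mulRight ℂ W := by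
      ext X; simp [mul_smul_comm]
    unfold toM; rw [RingHom.id_apply, h, map_smul]

lemma exp_toM_mulLeft (W : Mat d) :
    exp (toM (LinearMap.mulLeft ℂ W)) = toM (LinearMap.mulLeft ℂ (exp W)) := by
  have := exp_toM_comm (psiL (d := d)) W (fun n => by
    show toM _ = _
    rw [← LinearMap.pow_mulLeft, toM_pow]; rfl)
  exact this

lemma exp_toM_mulRight (W : Mat d) :
    exp (toM (LinearMap.mulRight ℂ W)) = toM (LinearMap.mulRight ℂ (exp W)) := by
  have := exp_toM_comm (psiR (d := d)) W (fun n => by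
    show toM _ = _
    rw [← LinearMap.pow_mulRight, toM_pow]; rfl)
  exact this

/-- The semigroup generated by `X ↦ G X + X W` acts by `X ↦ exp G * X * exp W`. -/
lemma expMap_K (G W : Mat d) (X : Mat d) :
    expMap (LinearMap.mulLeft ℂ G + LinearMap.mulRight ℂ W) X =
      exp G * X * exp W := by
  have hcomm : Commute (toM (LinearMap.mulLeft ℂ G)) (toM (LinearMap.mulRight ℂ W)) := by
    have : (LinearMap.mulLeft ℂ G) * (LinearMap.mulRight ℂ W)
        = (LinearMap.mulRight ℂ W) * (LinearMap.mulLeft ℂ G) := by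
      ext X
      simp [Module.End.mul_apply, mul_assoc]
    unfold Commute SemiconjBy
    rw [← toM_mul, ← toM_mul, this]
  rw [expMap_eq]
  have : toM (LinearMap.mulLeft ℂ G + LinearMap.mulRight ℂ W)
      = toM (LinearMap.mulLeft ℂ G) + toM (LinearMap.mulRight ℂ W) := by
    unfold toM; exact map_add _ _ _
  letI hQ : NormedAlgebra ℚ (MatN d) := NormedAlgebra.restrictScalars ℚ ℂ (MatN d)
  rw [this, exp_add_of_commute hcomm, exp_toM_mulLeft, exp_toM_mulRight, ofM_mul,
    LinearMap.comp_apply, ofM_toM, ofM_toM, LinearMap.mulLeft_apply, LinearMap.mulRight_apply,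
    mul_assoc]

end CPTPAux

namespace CPTPAux

open NormedSpace Filter
open scoped Nat

variable {d : ℕ}

lemma psd_smul_real {A : Mat d} (hA : A.PosSemidef) {r : ℝ} (hr : 0 ≤ r) :
    ((r : ℂ) • A).PosSemidef := by
  rw [Matrix.posSemidef_iff_dotProduct_mulVec]
  constructor
  · show ((r : ℂ) • A)ᴴ = _
    rw [Matrix.conjTranspose_smul, hA.1.eq, Complex.star_def, Complex.conj_ofReal]
  · intro x
    rw [Matrix.smul_mulVec, dotProduct_smul, smul_eq_mul]
    exact mul_nonneg (by exact_mod_cast hr) (hA.dotProduct_mulVec_nonneg x)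

lemma psd_of_tendsto {ι : Type*} {l : Filter ι} [l.NeBot] {F : ι → Mat d} {A : Mat d}
    (h : Tendsto F l (nhds A)) (hF : ∀ᶠ i in l, (F i).PosSemidef) : A.PosSemidef := by
  rw [Matrix.posSemidef_iff_dotProduct_mulVec]
  constructor
  · have h1 : Tendsto (fun i => (F i)ᴴ) l (nhds Aᴴ) :=
      ((Continuous.matrix_conjTranspose continuous_id).tendsto A).comp h
    have h2 : Tendsto F l (nhds Aᴴ) := h1.congr' (hF.mono fun i hi => hi.1.eq)
    exact tendsto_nhds_unique h2 h
  · intro x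
    have hq : Continuous (fun M : Mat d => star x ⬝ᵥ M *ᵥ x) := by
      exact continuous_const.dotProduct ((continuous_id.matrix_mulVec continuous_const))
    have hq1 : Tendsto (fun i => star x ⬝ᵥ (F i) *ᵥ x) l (nhds (star x ⬝ᵥ A *ᵥ x)) :=
      (hq.tendsto A).comp h
    have hre : 0 ≤ (star x ⬝ᵥ A *ᵥ x).re := by
      refine ge_of_tendsto ((Complex.continuous_re.tendsto _).comp hq1) ?_
      filter_upwards [hF] with i hi
      exact (Complex.le_def.mp (hi.dotProduct_mulVec_nonneg x)).1
    have him : (star x ⬝ᵥ A *ᵥ x).im = 0 := by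
      have h3 : Tendsto (fun i => (star x ⬝ᵥ (F i) *ᵥ x).im) l
          (nhds ((star x ⬝ᵥ A *ᵥ x).im)) := (Complex.continuous_im.tendsto _).comp hq1
      have h4 : Tendsto (fun i => (star x ⬝ᵥ (F i) *ᵥ x).im) l (nhds 0) := by
        refine Tendsto.congr' ?_ (@tendsto_const_nhds ℝ _ ι 0 l)
        filter_upwards [hF] with i hi
        simpa using (Complex.le_def.mp (hi.dotProduct_mulVec_nonneg x)).2
      exact tendsto_nhds_unique h3 h4
    rw [Complex.le_def]
    simp [hre, him]

lemma psd_sum {ι : Type*} (s : Finset ι) (f : ι → Mat d) (h : ∀ i ∈ s, (f i).PosSemidef) :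
    (∑ i ∈ s, f i).PosSemidef :=
  Finset.sum_induction f Matrix.PosSemidef (fun _ _ ha hb => ha.add hb) Matrix.PosSemidef.zero h

lemma psd_of_hasSum {f : ℕ → Mat d} {A : Mat d} (h : HasSum f A)
    (hf : ∀ n, (f n).PosSemidef) : A.PosSemidef :=
  psd_of_tendsto h (Eventually.of_forall fun s => psd_sum s f fun i _ => hf i)

lemma expMap_trace (f : Mat d →ₗ[ℂ] Mat d) (hf : ∀ Y, (f Y).trace = 0) (X : Mat d) :
    (expMap f X).trace = X.trace := by
  have h := expMap_hasSum f X
  have htr := ((Matrix.traceLinearMap (Fin d) ℂ ℂ).toContinuousLinearMap).hasSum h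
  have hterm : ∀ n : ℕ,
      (Matrix.traceLinearMap (Fin d) ℂ ℂ).toContinuousLinearMap ((n !⁻¹ : ℂ) • ((f ^ n) X))
        = if n = 0 then X.trace else 0 := by
    intro n
    cases n with
    | zero => simp
    | succ k =>
      have : (f ^ (k + 1)) X = f ((f ^ k) X) := by
        rw [pow_succ']; rfl
      simp [this, hf]
  exact (htr.congr_fun (fun n => (hterm n).symm)).unique (hasSum_ite_eq 0 X.trace)

lemma trace_lindblad {m : ℕ} (H : Mat d) (C : Fin m → Mat d) (X : Mat d) :
    ((lindblad H C) X).trace = 0 := by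
  simp only [lindblad, LinearMap.add_apply, LinearMap.smul_apply, LinearMap.sub_apply,
    LinearMap.coe_sum, Finset.sum_apply, LinearMap.comp_apply, LinearMap.mulLeft_apply,
    LinearMap.mulRight_apply]
  rw [Matrix.trace_add, Matrix.trace_smul, Matrix.trace_sub, Matrix.trace_sum]
  rw [Finset.sum_eq_zero (fun j _ => ?_)]
  · simp [Matrix.trace_mul_comm H X]
  · rw [Matrix.trace_sub, Matrix.trace_smul, Matrix.trace_add, ← mul_assoc,
      Matrix.trace_mul_cycle (C j) X ((C j)ᴴ), Matrix.trace_mul_comm X ((C j)ᴴ * C j)]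
    simp only [smul_eq_mul]
    ring

end CPTPAux

namespace CPTPAux

open NormedSpace Filter
open scoped Nat

variable {d : ℕ}

lemma psd_expMap_K (G : Mat d) (X : Mat d) (hX : X.PosSemidef) :
    (expMap (LinearMap.mulLeft ℂ G + LinearMap.mulRight ℂ Gᴴ) X).PosSemidef := by
  rw [expMap_K, Matrix.exp_conjTranspose]
  exact hX.mul_mul_conjTranspose_same (exp G)

lemma pow_preserves_psd (f : Mat d →ₗ[ℂ] Mat d)
    (hf : ∀ Y : Mat d, Y.PosSemidef → (f Y).PosSemidef) (n : ℕ) :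
    ∀ Y : Mat d, Y.PosSemidef → ((f ^ n) Y).PosSemidef := by
  induction n with
  | zero => intro Y hY; simpa using hY
  | succ k ih =>
    intro Y hY
    have h1 : f ^ (k + 1) = f * f ^ k := pow_succ' f k
    rw [h1]
    exact hf _ (ih Y hY)

lemma psd_expMap_CP (s : ℝ) (hs : 0 ≤ s) (Φ : Mat d →ₗ[ℂ] Mat d)
    (hΦ : ∀ Y : Mat d, Y.PosSemidef → (Φ Y).PosSemidef) (X : Mat d) (hX : X.PosSemidef) :
    (expMap ((s : ℂ) • Φ) X).PosSemidef := by
  refine psd_of_hasSum (expMap_hasSum _ X) (fun n => ?_)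
  have h1 : (((s : ℂ) • Φ) ^ n) X = (s : ℂ) ^ n • ((Φ ^ n) X) := by
    rw [smul_pow]; rfl
  rw [h1, smul_smul]
  have h2 : (n !⁻¹ : ℂ) * (s : ℂ) ^ n = (((n !⁻¹ : ℝ) * s ^ n : ℝ) : ℂ) := by
    push_cast; ring
  rw [h2]
  exact psd_smul_real (pow_preserves_psd Φ hΦ n X hX) (by positivity)

lemma l2_norm_one {n : Type*} [Fintype n] [DecidableEq n] [Nonempty n] :
    ‖(1 : Matrix n n ℂ)‖ = 1 := by
  rw [Matrix.cstar_norm_def, map_one]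
  exact ContinuousLinearMap.norm_id

/-- The effective (non-hermitian) Hamiltonian part of the Lindblad generator. -/
noncomputable def Gmat {m : ℕ} (H : Mat d) (C : Fin m → Mat d) : Mat d :=
  (-Complex.I) • H - (1/2 : ℂ) • ∑ j, (C j)ᴴ * C j

lemma Gmat_conjTranspose {m : ℕ} (H : Mat d) (hH : Hᴴ = H) (C : Fin m → Mat d) :
    (Gmat H C)ᴴ = Complex.I • H - (1/2 : ℂ) • ∑ j, (C j)ᴴ * C j := by
  have hS : (∑ j, (C j)ᴴ * C j)ᴴ = ∑ j, (C j)ᴴ * C j := by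
    rw [Matrix.conjTranspose_sum]
    exact Finset.sum_congr rfl fun j _ => by
      rw [Matrix.conjTranspose_mul, Matrix.conjTranspose_conjTranspose]
  rw [Gmat, Matrix.conjTranspose_sub, Matrix.conjTranspose_smul, Matrix.conjTranspose_smul,
    hH, hS]
  simp [Complex.star_def]

/-- Decomposition of the Lindblad generator into a `K`-part and a completely positive part. -/
lemma lindblad_decomp {m : ℕ} (H : Mat d) (hH : Hᴴ = H) (C : Fin m → Mat d) :
    lindblad H C = (LinearMap.mulLeft ℂ (Gmat H C) + LinearMap.mulRight ℂ (Gmat H C)ᴴ)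
      + ∑ j, (LinearMap.mulLeft ℂ (C j)).comp (LinearMap.mulRight ℂ (C j)ᴴ) := by
  apply LinearMap.ext
  intro X
  simp only [lindblad, LinearMap.add_apply, LinearMap.smul_apply, LinearMap.sub_apply,
    LinearMap.coe_sum, Finset.sum_apply, LinearMap.comp_apply, LinearMap.mulLeft_apply,
    LinearMap.mulRight_apply]
  rw [Gmat_conjTranspose H hH C]
  unfold Gmat
  simp only [Matrix.sub_mul, Matrix.mul_sub, Matrix.smul_mul, Matrix.mul_smul,
    Finset.sum_mul, Finset.mul_sum, Finset.sum_sub_distrib, smul_add, smul_sub,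
    Finset.sum_add_distrib, ← Finset.smul_sum]
  module

end CPTPAux

/-- `exp(tL_S)` is a positive, trace preserving map for every `t ≥ 0`. -/
theorem stmt7 {d m : ℕ} (hd : 1 ≤ d) (H : Mat d) (hH : Hᴴ = H) (C : Fin (m + 1) → Mat d)
    (Ps : Mat d) (hPs : Psᴴ = Ps) (hPs2 : Ps * Ps = Ps) :
    ∀ t : ℝ, 0 ≤ t →
      (∀ X : Mat d, X.PosSemidef → (expMap ((t : ℂ) • lindbladS H C Ps) X).PosSemidef) ∧
      (∀ X : Mat d, (expMap ((t : ℂ) • lindbladS H C Ps) X).trace = X.trace)  := by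
  intro t ht
  haveI : Nonempty (Fin d) := ⟨⟨0, hd⟩⟩
  haveI hno : NormOneClass (CPTPAux.MatN d) := ⟨CPTPAux.l2_norm_one⟩
  have hH'h : (Ps * H * Ps)ᴴ = Ps * H * Ps := by
    rw [Matrix.conjTranspose_mul, Matrix.conjTranspose_mul, hPs, hH, mul_assoc]
  set C' : Fin (m + 1) → Mat d := fun j => Ps * C j * Ps with hC'
  set G : Mat d := CPTPAux.Gmat (Ps * H * Ps) C' with hG
  set K : Mat d →ₗ[ℂ] Mat d := LinearMap.mulLeft ℂ G + LinearMap.mulRight ℂ Gᴴ with hK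
  set Φ : Mat d →ₗ[ℂ] Mat d :=
    ∑ j, (LinearMap.mulLeft ℂ (C' j)).comp (LinearMap.mulRight ℂ (C' j)ᴴ) with hPhi
  have hdec : lindbladS H C Ps = K + Φ :=
    CPTPAux.lindblad_decomp (Ps * H * Ps) hH'h C'
  have hKr : ∀ r : ℝ, (r : ℂ) • K =
      LinearMap.mulLeft ℂ ((r : ℂ) • G) + LinearMap.mulRight ℂ (((r : ℂ) • G)ᴴ) := by
    intro r
    rw [hK, smul_add]
    congr 1
    · ext Z; simp [smul_mul_assoc]
    · ext Z
      simp [Matrix.conjTranspose_smul, Complex.star_def, Complex.conj_ofReal, mul_smul_comm]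
  have hΦpos : ∀ Y : Mat d, Y.PosSemidef → (Φ Y).PosSemidef := by
    intro Y hY
    rw [hPhi]
    simp only [LinearMap.coe_sum, Finset.sum_apply, LinearMap.comp_apply,
      LinearMap.mulLeft_apply, LinearMap.mulRight_apply]
    refine CPTPAux.psd_sum _ _ (fun j _ => ?_)
    rw [← mul_assoc]
    exact hY.mul_mul_conjTranspose_same (C' j)
  constructor
  · -- positivity
    intro X hX
    set Am := CPTPAux.toM ((t : ℂ) • K) with hAm
    set Bm := CPTPAux.toM ((t : ℂ) • Φ) with hBm
    have hsum : CPTPAux.toM ((t : ℂ) • lindbladS H C Ps) = Am + Bm := by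
      rw [hAm, hBm]
      unfold CPTPAux.toM
      rw [hdec, smul_add, map_add]
    have htrot := my_trotter Am Bm
    rw [← hsum] at htrot
    have htrot2 := ((CPTPAux.evalCLM X).continuous.tendsto _).comp htrot
    have heval : CPTPAux.evalCLM X
        (NormedSpace.exp (CPTPAux.toM ((t : ℂ) • lindbladS H C Ps)))
        = expMap ((t : ℂ) • lindbladS H C Ps) X := by
      rw [CPTPAux.evalCLM_apply, CPTPAux.expMap_eq]
    rw [heval] at htrot2
    refine CPTPAux.psd_of_tendsto htrot2 (Filter.Eventually.of_forall (fun n => ?_))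
    show (CPTPAux.evalCLM X
      ((NormedSpace.exp ((n : ℂ)⁻¹ • Am) * NormedSpace.exp ((n : ℂ)⁻¹ • Bm)) ^ n)).PosSemidef
    rw [CPTPAux.evalCLM_apply, CPTPAux.ofM_pow]
    refine CPTPAux.pow_preserves_psd _ (fun Y hY => ?_) n X hX
    rw [CPTPAux.ofM_mul]
    have hA' : (n : ℂ)⁻¹ • Am = CPTPAux.toM (((t / n : ℝ) : ℂ) • K) := by
      rw [hAm]
      unfold CPTPAux.toM
      rw [← map_smul, smul_smul]
      congr 2
      push_cast
      ring
    have hB' : (n : ℂ)⁻¹ • Bm = CPTPAux.toM (((t / n : ℝ) : ℂ) • Φ) := by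
      rw [hBm]
      unfold CPTPAux.toM
      rw [← map_smul, smul_smul]
      congr 2
      push_cast
      ring
    have htn : (0 : ℝ) ≤ t / n := by positivity
    rw [hA', hB', LinearMap.comp_apply]
    have hinner : (CPTPAux.ofM (NormedSpace.exp (CPTPAux.toM (((t / n : ℝ) : ℂ) • Φ))) Y).PosSemidef := by
      rw [← CPTPAux.expMap_eq]
      exact CPTPAux.psd_expMap_CP _ htn Φ hΦpos Y hY
    rw [← CPTPAux.expMap_eq, ← CPTPAux.expMap_eq]
    rw [hKr (t / n)]
    exact CPTPAux.psd_expMap_K _ _ (by rw [← CPTPAux.expMap_eq] at hinner; exact hinner)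
  · -- trace preservation
    intro X
    refine CPTPAux.expMap_trace _ (fun Y => ?_) X
    rw [LinearMap.smul_apply, Matrix.trace_smul]
    have h0 : ((lindbladS H C Ps) Y).trace = 0 := CPTPAux.trace_lindblad _ _ Y
    rw [h0, smul_zero]


end
end

section
/- Assume the invariance block condition. Then for every state ρ₀ and every t ≥ 0 one has P_R exp(tL)(ρ₀) P_R = exp(tL_R)(P_R ρ₀ P_R). -/
open scoped ComplexOrder Matrix Matrix.Norms.L2Operator

noncomputable section

lemma exp_intertwine {A : Type*} [NormedRing A] [NormedAlgebra ℂ A] [CompleteSpace A]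
    (M X Y : A) (h : M * X = Y * M) :
    M * NormedSpace.exp X = NormedSpace.exp Y * M := by
  have hn : ∀ n : ℕ, M * X ^ n = Y ^ n * M := by
    intro n
    induction n with
    | zero => simp
    | succ n ih =>
      rw [pow_succ, ← mul_assoc, ih, mul_assoc, h, ← mul_assoc, ← pow_succ]
  rw [NormedSpace.exp_eq_tsum ℂ]; beta_reduce
  rw [← (NormedSpace.expSeries_summable' (𝕂 := ℂ) X).tsum_mul_left M,
    ← (NormedSpace.expSeries_summable' (𝕂 := ℂ) Y).tsum_mul_right M]
  congr 1
  ext n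
  rw [mul_smul_comm, smul_mul_assoc, hn]

set_option maxHeartbeats 2000000 in
theorem key_block {d m : ℕ} (H : Mat d) (hH : Hᴴ = H) (C : Fin m → Mat d) (Ps : Mat d)
    (hPs : Psᴴ = Ps) (hPs2 : Ps * Ps = Ps) (hblock : BlockInv H C Ps) (X : Mat d) :
    (1 - Ps) * lindblad H C X * (1 - Ps) = lindbladR H C Ps ((1 - Ps) * X * (1 - Ps)) := by
  obtain ⟨hc, hD⟩ := hblock
  set Q : Mat d := 1 - Ps with hQdef
  have hPs' : Ps = 1 - Q := by rw [hQdef]; abel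
  have hQh : Qᴴ = Q := by
    rw [hQdef, Matrix.conjTranspose_sub, Matrix.conjTranspose_one, hPs]
  have hQ2 : Q * Q = Q := by
    rw [hQdef]; simp [mul_sub, sub_mul, hPs2]
  have e1 : ∀ y : Mat d, Q * (Q * y) = Q * y := by
    intro y; rw [← mul_assoc, hQ2]
  have hqc : ∀ j, Q * C j * Q = Q * C j := by
    intro j
    have := hc j
    rw [hPs'] at this
    rw [mul_sub, mul_one] at this
    linear_combination (norm := abel) -this
  have e2 : ∀ j, ∀ y : Mat d, Q * (C j * (Q * y)) = Q * (C j * y) := by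
    intro j y
    calc Q * (C j * (Q * y)) = (Q * C j * Q) * y := by rw [mul_assoc, mul_assoc]
    _ = Q * (C j * y) := by rw [hqc, mul_assoc]
  have e2' : ∀ j, Q * (C j * Q) = Q * C j := by
    intro j; rw [← mul_assoc, hqc]
  have hcq : ∀ j, Q * (C j)ᴴ * Q = (C j)ᴴ * Q := by
    intro j
    have := congrArg Matrix.conjTranspose (hqc j)
    simpa [Matrix.conjTranspose_mul, hQh, mul_assoc] using this
  have e3 : ∀ j, ∀ y : Mat d, Q * ((C j)ᴴ * (Q * y)) = (C j)ᴴ * (Q * y) := by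
    intro j y
    calc Q * ((C j)ᴴ * (Q * y)) = (Q * (C j)ᴴ * Q) * y := by rw [mul_assoc, mul_assoc]
    _ = (C j)ᴴ * (Q * y) := by rw [hcq, mul_assoc]
  have e3' : ∀ j, Q * ((C j)ᴴ * Q) = (C j)ᴴ * Q := by
    intro j; rw [← mul_assoc, hcq]
  have hDh : (-Complex.I) • (Q * H * (1 - Q)) -
      (1/2 : ℂ) • ∑ j, ((1 - Q) * C j * Q)ᴴ * ((1 - Q) * C j * ((1 - Q) : Mat d)) = 0 := by
    have := congrArg Matrix.conjTranspose hD
    rw [hPs'] at this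
    simpa [Matrix.conjTranspose_sub, Matrix.conjTranspose_smul, Matrix.conjTranspose_sum,
      Matrix.conjTranspose_mul, Matrix.conjTranspose_one, hH, hQh, Complex.star_def,
      Complex.conj_I, mul_assoc, neg_smul] using this
  have hD' : Complex.I • ((1 - Q) * H * Q) -
      (1/2 : ℂ) • ∑ j, ((1 - Q) * C j * ((1 - Q) : Mat d))ᴴ * ((1 - Q) * C j * Q) = 0 := by
    rw [hPs'] at hD; exact hD
  have main : Q * lindblad H C X * Q =
      lindbladR H C Ps (Q * X * Q)
      + ((-Complex.I) • (Q * H * (1 - Q)) -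
          (1/2 : ℂ) • ∑ j, ((1 - Q) * C j * Q)ᴴ * ((1 - Q) * C j * ((1 - Q) : Mat d))) * (X * Q)
      + (Q * X) * (Complex.I • ((1 - Q) * H * Q) -
          (1/2 : ℂ) • ∑ j, ((1 - Q) * C j * ((1 - Q) : Mat d))ᴴ * ((1 - Q) * C j * Q)) := by
    rw [lindbladR, lindblad, lindblad, hPs']
    simp only [LinearMap.add_apply, LinearMap.sub_apply, LinearMap.smul_apply,
      LinearMap.sum_apply, LinearMap.comp_apply, LinearMap.mulLeft_apply,
      LinearMap.mulRight_apply, Matrix.conjTranspose_mul, Matrix.conjTranspose_sub,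
      Matrix.conjTranspose_one, hQh,
      mul_sub, sub_mul, mul_add, add_mul, mul_one, one_mul, smul_sub, smul_add,
      Finset.sum_mul, Finset.mul_sum, Finset.sum_add_distrib, Finset.sum_sub_distrib,
      smul_mul_assoc, mul_smul_comm, mul_assoc, e1, hQ2, e2, e2', e3, e3',
      ← Finset.smul_sum]
    module
  rw [main, hDh, hD', zero_mul, mul_zero, add_zero, add_zero]


/-- Under the invariance block condition, the `R` block of the mean evolution is
governed by `exp(tL_R)`: `P_R exp(tL)(ρ₀) P_R = exp(tL_R)(P_R ρ₀ P_R)`. -/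
theorem stmt10 {d m : ℕ} (hd : 1 ≤ d) (H : Mat d) (hH : Hᴴ = H) (C : Fin (m + 1) → Mat d)
    (Ps : Mat d) (hPs : Psᴴ = Ps) (hPs2 : Ps * Ps = Ps)
    (hblock : BlockInv H C Ps) :
    ∀ ρ₀ : Mat d, IsState ρ₀ → ∀ t : ℝ, 0 ≤ t →
      ((1 : Mat d) - Ps) * expMap ((t : ℂ) • lindblad H C) ρ₀ * ((1 : Mat d) - Ps)
        = expMap ((t : ℂ) • lindbladR H C Ps) (((1 : Mat d) - Ps) * ρ₀ * ((1 : Mat d) - Ps)) := by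
  intro ρ₀ _ t _
  classical
  set b := Matrix.stdBasis ℂ (Fin d) (Fin d)
  set Φ : Mat d →ₗ[ℂ] Mat d :=
    (LinearMap.mulLeft ℂ ((1 : Mat d) - Ps)).comp (LinearMap.mulRight ℂ ((1 : Mat d) - Ps))
    with hΦ
  have hΦapp : ∀ X : Mat d, Φ X = ((1 : Mat d) - Ps) * X * ((1 : Mat d) - Ps) := by
    intro X
    simp [hΦ, LinearMap.comp_apply, LinearMap.mulLeft_apply, LinearMap.mulRight_apply,
      mul_assoc]
  have hcomp : Φ.comp ((t : ℂ) • lindblad H C) = ((t : ℂ) • lindbladR H C Ps).comp Φ := by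
    apply LinearMap.ext
    intro X
    simp only [LinearMap.comp_apply, LinearMap.smul_apply, hΦapp, LinearMap.map_smul]
    rw [mul_smul_comm, smul_mul_assoc]
    rw [key_block H hH C Ps hPs hPs2 hblock X]
  have hMA : (LinearMap.toMatrix b b Φ) * (LinearMap.toMatrix b b ((t : ℂ) • lindblad H C))
      = (LinearMap.toMatrix b b ((t : ℂ) • lindbladR H C Ps)) * (LinearMap.toMatrix b b Φ) := by
    rw [← LinearMap.toMatrix_comp b b b, ← LinearMap.toMatrix_comp b b b, hcomp]
  have hexp := exp_intertwine (LinearMap.toMatrix b b Φ)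
    (LinearMap.toMatrix b b ((t : ℂ) • lindblad H C))
    (LinearMap.toMatrix b b ((t : ℂ) • lindbladR H C Ps)) hMA
  have hfinal : Φ.comp (expMap ((t : ℂ) • lindblad H C))
      = (expMap ((t : ℂ) • lindbladR H C Ps)).comp Φ := by
    rw [expMap, expMap]
    have h1 : Φ.comp (Matrix.toLin b b (NormedSpace.exp
        (LinearMap.toMatrix b b ((t : ℂ) • lindblad H C))))
        = Matrix.toLin b b ((LinearMap.toMatrix b b Φ) *
            NormedSpace.exp (LinearMap.toMatrix b b ((t : ℂ) • lindblad H C))) := by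
      rw [Matrix.toLin_mul b b b, Matrix.toLin_toMatrix]
    have h2 : (Matrix.toLin b b (NormedSpace.exp
        (LinearMap.toMatrix b b ((t : ℂ) • lindbladR H C Ps)))).comp Φ
        = Matrix.toLin b b (NormedSpace.exp
            (LinearMap.toMatrix b b ((t : ℂ) • lindbladR H C Ps)) * (LinearMap.toMatrix b b Φ)) := by
      rw [Matrix.toLin_mul b b b, Matrix.toLin_toMatrix]
    rw [h1, h2, hexp]
  have := congrArg (fun f : Mat d →ₗ[ℂ] Mat d => f ρ₀) hfinal
  simpa [LinearMap.comp_apply, hΦapp] using this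

end
end

section
/- Assume P_S ≠ 0, P_R ≠ 0 and assumption SP. Then the function (ρ, ρ_R) ↦ α(ρ, ρ_R) is continuous on the set of pairs (ρ, ρ_R) where ρ is a state and ρ_R is a state supported on H_R, and the infimum defining α₁ is attained: there exist a state ρ* with tr(P_S ρ*) = 1 and a state ρ_R* supported on H_R such that α(ρ*, ρ_R*) = α₁. -/
open scoped ComplexOrder Matrix Matrix.Norms.L2Operator

noncomputable section

section Stmt17Helpers

variable {d m : ℕ}

lemma single_dot_single (ρ : Mat d) (k l : Fin d) (a b : ℂ) :
    star (Pi.single k a) ⬝ᵥ ρ *ᵥ (Pi.single l b) = (starRingEnd ℂ) a * (ρ k l * b) := by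
  rw [Matrix.mulVec_single, ← Pi.single_star, single_dotProduct]
  rfl

lemma diag_nonneg' {ρ : Mat d} (h : ρ.PosSemidef) (k : Fin d) : 0 ≤ ρ k k := by
  have := h.dotProduct_mulVec_nonneg (Pi.single k 1)
  rw [single_dot_single] at this
  simpa using this

lemma diag_re_le_one {ρ : Mat d} (h : ρ.PosSemidef) (ht : ρ.trace = 1) (k : Fin d) :
    (ρ k k).re ≤ 1 := by
  have h1 : ∀ l : Fin d, 0 ≤ (ρ l l).re := fun l => (Complex.le_def.mp (diag_nonneg' h l)).1
  have h2 : ∑ l : Fin d, (ρ l l).re = 1 := by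
    have := congrArg Complex.re ht
    simpa [Matrix.trace, Matrix.diag, Complex.re_sum] using this
  calc (ρ k k).re ≤ ∑ l, (ρ l l).re :=
        Finset.single_le_sum (fun l _ => h1 l) (Finset.mem_univ k)
    _ = 1 := h2

lemma norm_nonneg_complex {z : ℂ} (hz : 0 ≤ z) : ‖z‖ = z.re := by
  obtain ⟨h1, h2⟩ := Complex.le_def.mp hz
  simp only [Complex.zero_re, Complex.zero_im] at h1 h2
  rw [show z = ((z.re : ℝ) : ℂ) from Complex.ext (by simp) (by simp [← h2])]
  simp [abs_of_nonneg h1]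

lemma entry_norm_le {ρ : Mat d} (h : ρ.PosSemidef) (ht : ρ.trace = 1) (i j : Fin d) :
    ‖ρ i j‖ ≤ 1 := by
  by_cases hij : i = j
  · subst hij
    rw [norm_nonneg_complex (diag_nonneg' h i)]
    exact diag_re_le_one h ht i
  · by_cases hz : ρ i j = 0
    · simp [hz]
    · set z := ρ i j with hzdef
      set c : ℂ := -((starRingEnd ℂ) z) / (‖z‖ : ℂ) with hc
      have hji : ρ j i = (starRingEnd ℂ) z := by
        have := congrFun (congrFun h.1 j) i
        rw [Matrix.conjTranspose_apply] at this
        rw [← this]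
        rfl
      have hnz : (‖z‖ : ℂ) ≠ 0 := by
        simpa using norm_ne_zero_iff.mpr hz
      have hx := h.dotProduct_mulVec_nonneg (Pi.single i 1 + Pi.single j c)
      have expand : star (Pi.single i (1:ℂ) + Pi.single j c) ⬝ᵥ ρ *ᵥ (Pi.single i 1 + Pi.single j c)
          = (star (Pi.single i (1:ℂ)) ⬝ᵥ ρ *ᵥ Pi.single i 1)
            + (star (Pi.single i (1:ℂ)) ⬝ᵥ ρ *ᵥ Pi.single j c)
            + (star (Pi.single j c) ⬝ᵥ ρ *ᵥ Pi.single i 1)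
            + (star (Pi.single j c) ⬝ᵥ ρ *ᵥ Pi.single j c) := by
        simp only [star_add, Matrix.mulVec_add, add_dotProduct, dotProduct_add]
        ring
      rw [expand] at hx
      rw [single_dot_single, single_dot_single, single_dot_single, single_dot_single] at hx
      have habs : z * (starRingEnd ℂ) z = ((‖z‖^2 : ℝ) : ℂ) := by
        rw [Complex.mul_conj]
        norm_cast
        simp [Complex.normSq_eq_norm_sq]
      have hzc : z * c = -(‖z‖ : ℂ) := by
        rw [hc, mul_div_assoc', mul_neg, habs]
        push_cast
        rw [neg_div, pow_two, mul_div_assoc, div_self hnz, mul_one]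
      have hcz : (starRingEnd ℂ) c * ρ j i = -(‖z‖ : ℂ) := by
        rw [hji, ← map_mul, mul_comm, hzc]
        simp [map_neg, Complex.conj_ofReal]
      have hcc : (starRingEnd ℂ) c * (ρ j j * c) = ρ j j := by
        rw [show (starRingEnd ℂ) c * (ρ j j * c) = ρ j j * (c * (starRingEnd ℂ) c) by ring,
          Complex.mul_conj]
        have h1 : Complex.normSq c = 1 := by
          rw [hc]
          have hz' : ‖z‖ ≠ 0 := by
            simpa using norm_ne_zero_iff.mpr hz
          rw [Complex.normSq_div, Complex.normSq_neg, Complex.normSq_conj, Complex.normSq_ofReal,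
            Complex.normSq_eq_norm_sq, pow_two, div_self (mul_ne_zero hz' hz')]
        rw [h1]
        simp
      have key : (0:ℂ) ≤ ρ i i + ρ j j - 2 * (‖z‖ : ℂ) := by
        have e : (starRingEnd ℂ) 1 * (ρ i i * 1) + (starRingEnd ℂ) 1 * (ρ i j * c)
            + (starRingEnd ℂ) c * (ρ j i * 1) + (starRingEnd ℂ) c * (ρ j j * c)
            = ρ i i + ρ j j - 2 * (‖z‖ : ℂ) := by
          rw [map_one, one_mul, one_mul, mul_one, mul_one, ← hzdef, hzc, hcz, hcc]
          ring
        rw [e] at hx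
        exact hx
      have hre := (Complex.le_def.mp key).1
      simp only [Complex.zero_re, Complex.sub_re, Complex.add_re, Complex.mul_re,
        Complex.ofReal_re, Complex.ofReal_im] at hre
      have d1 := diag_re_le_one h ht i
      have d2 := diag_re_le_one h ht j
      have hzz : ‖ρ i j‖ = ‖z‖ := by rw [hzdef]
      rw [hzz]
      norm_num at hre
      linarith

lemma diag_conj_form (A B : Mat d) (k : Fin d) :
    (A * B * Aᴴ) k k = star (fun l => star (A k l)) ⬝ᵥ B *ᵥ (fun l => star (A k l)) := by
  simp only [Matrix.mul_apply, Matrix.conjTranspose_apply, Matrix.mulVec, dotProduct,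
    Pi.star_apply, star_star, Finset.sum_mul, Finset.mul_sum]
  rw [Finset.sum_comm]
  congr 1
  ext i
  congr 1
  ext l
  ring

lemma vValR_pos (C : Fin m → Mat d) (p : ℕ) (Ps : Mat d) (hPs : Psᴴ = Ps) (hPs2 : Ps * Ps = Ps)
    (hSP : AssumpSP C p Ps) (j : Fin m) (hj : p ≤ (j : ℕ)) {ρR : Mat d}
    (hρ : IsState ρR) (hsupp : ((1 : Mat d) - Ps) * ρR * ((1 : Mat d) - Ps) = ρR) :
    0 < vValR C Ps j ρR := by
  set B : Mat d := ((1 - Ps) * C j * (1 - Ps))ᴴ * ((1 - Ps) * C j * (1 - Ps)) with hB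
  obtain ⟨A, hA⟩ : ∃ A : Mat d, ρR = Aᴴ * A := by
    open scoped MatrixOrder in
    obtain ⟨B', hB'⟩ := CStarAlgebra.nonneg_iff_eq_star_mul_self.mp hρ.1.nonneg
    exact ⟨B', hB'⟩
  have hPsPr : Ps * ((1 : Mat d) - Ps) = 0 := by
    rw [Matrix.mul_sub, Matrix.mul_one, hPs2, sub_self]
  have hAPs0 : A * Ps = 0 := by
    rw [← Matrix.conjTranspose_mul_self_eq_zero (A := A * Ps)]
    have e1 : (A * Ps)ᴴ * (A * Ps) = Ps * (Aᴴ * A) * Ps := by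
      rw [Matrix.conjTranspose_mul, hPs]
      simp only [Matrix.mul_assoc]
    rw [e1, ← hA, ← hsupp]
    have : Ps * (((1:Mat d) - Ps) * ρR * ((1:Mat d) - Ps)) * Ps
        = (Ps * ((1:Mat d) - Ps)) * (ρR * (((1:Mat d) - Ps) * Ps)) := by
      simp only [Matrix.mul_assoc]
    rw [this, hPsPr, Matrix.zero_mul]
  have hAPr : A * ((1:Mat d) - Ps) = A := by
    rw [Matrix.mul_sub, Matrix.mul_one, hAPs0, sub_zero]
  have hAne : A ≠ 0 := by
    intro h0
    rw [h0] at hA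
    simp only [Matrix.conjTranspose_zero, Matrix.mul_zero, Matrix.zero_mul] at hA
    have := hρ.2
    rw [hA] at this
    simp at this
  have hBpsd : B.PosSemidef := Matrix.posSemidef_conjTranspose_mul_self _
  have hPr' : ∀ a b : Fin d, star ((((1:Mat d) - Ps)) a b) = (((1:Mat d) - Ps)) b a := by
    have h1 : ((1:Mat d) - Ps)ᴴ = (1:Mat d) - Ps := by
      rw [Matrix.conjTranspose_sub, Matrix.conjTranspose_one, hPs]
    intro a b
    rw [← Matrix.conjTranspose_apply]
    exact congrFun (congrFun h1 b) a
  have htr : vValR C Ps j ρR = ((A * B * Aᴴ).trace).re := by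
    have e : ((1 - Ps) * C j * (1 - Ps))ᴴ * ((1 - Ps) * C j * (1 - Ps)) * ρR = B * Aᴴ * A := by
      rw [hB, hA]
      simp only [Matrix.mul_assoc]
    unfold vValR
    rw [e, Matrix.trace_mul_cycle]
  set y : Fin d → Fin d → ℂ := fun k l => star (A k l) with hy
  have hy_fix : ∀ k, ((1:Mat d) - Ps) *ᵥ y k = y k := by
    intro k
    funext l
    have hthis := congrFun (congrFun hAPr k) l
    rw [Matrix.mul_apply] at hthis
    calc (((1:Mat d) - Ps) *ᵥ y k) l = ∑ i, ((1:Mat d) - Ps) l i * star (A k i) := rfl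
      _ = star (∑ i, A k i * ((1:Mat d) - Ps) i l) := by
          rw [star_sum]
          refine Finset.sum_congr rfl fun i _ => ?_
          rw [star_mul', hPr' i l]
          exact mul_comm _ _
      _ = star (A k l) := by rw [hthis]
      _ = y k l := rfl
  have hdiag : ∀ k, (A * B * Aᴴ) k k = star (y k) ⬝ᵥ B *ᵥ (y k) := fun k => diag_conj_form A B k
  have hnonneg : ∀ k : Fin d, 0 ≤ ((A * B * Aᴴ) k k).re := by
    intro k
    rw [hdiag k]
    exact (Complex.le_def.mp (hBpsd.dotProduct_mulVec_nonneg (y k))).1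
  obtain ⟨k, l, hkl⟩ : ∃ k l, A k l ≠ 0 := by
    by_contra hcon
    push_neg at hcon
    exact hAne (by ext k l; simpa using hcon k l)
  have hykne : y k ≠ 0 := by
    intro h0
    have := congrFun h0 l
    simp only [hy, Pi.zero_apply, star_eq_zero] at this
    exact hkl this
  have hposk : 0 < ((A * B * Aᴴ) k k).re := by
    rw [hdiag k]
    have := hSP j hj (y k) hykne (hy_fix k)
    rw [← hB] at this
    exact (Complex.lt_def.mp this).1
  rw [htr, Matrix.trace, Complex.re_sum]
  exact Finset.sum_pos' (fun i _ => hnonneg i) ⟨k, Finset.mem_univ k, hposk⟩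

lemma exists_state_proj (P : Mat d) (hP : Pᴴ = P) (hP2 : P * P = P) (hne : P ≠ 0) :
    ∃ ρ : Mat d, IsState ρ ∧ P * ρ * P = ρ := by
  obtain ⟨a, b, hab⟩ : ∃ a b, P a b ≠ 0 := by
    by_contra hcon
    push_neg at hcon
    exact hne (by ext i j; simpa using hcon i j)
  set w : Fin d → ℂ := fun i => P i b with hw
  have hPw : P *ᵥ w = w := by
    funext i
    have := congrFun (congrFun hP2 i) b
    rw [Matrix.mul_apply] at this
    exact this
  set S : ℝ := ∑ i, Complex.normSq (w i) with hS
  have hSpos : 0 < S := by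
    refine Finset.sum_pos' (fun i _ => Complex.normSq_nonneg _) ⟨a, Finset.mem_univ a, ?_⟩
    exact Complex.normSq_pos.mpr hab
  set n : ℝ := Real.sqrt S with hn
  have hnpos : 0 < n := Real.sqrt_pos.mpr hSpos
  have hnn : n * n = S := Real.mul_self_sqrt hSpos.le
  set u : Fin d → ℂ := ((n : ℂ)⁻¹) • w with hu
  have hPu : P *ᵥ u = u := by
    rw [hu, Matrix.mulVec_smul, hPw]
  set ρ : Mat d := Matrix.vecMulVec u (star u) with hρ
  have hherm : ρᴴ = ρ := by
    ext i j
    simp [hρ, Matrix.conjTranspose_apply, Matrix.vecMulVec_apply, mul_comm]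
  have hform : ∀ x : Fin d → ℂ, star x ⬝ᵥ ρ *ᵥ x = star (star u ⬝ᵥ x) * (star u ⬝ᵥ x) := by
    intro x
    simp only [hρ, Matrix.mulVec, dotProduct, Matrix.vecMulVec_apply, Pi.star_apply,
      star_sum, star_mul', star_star, Finset.mul_sum, Finset.sum_mul]
    rw [Finset.sum_comm]
    refine Finset.sum_congr rfl fun i _ => Finset.sum_congr rfl fun k _ => by ring
  have hpsd : ρ.PosSemidef := by
    refine Matrix.PosSemidef.of_dotProduct_mulVec_nonneg hherm fun x => ?_
    rw [hform x]
    exact star_mul_self_nonneg _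
  have htrace : ρ.trace = 1 := by
    rw [Matrix.trace]
    have hdg : ∀ i, ρ.diag i = ((Complex.normSq (u i) : ℝ) : ℂ) := by
      intro i
      simp [hρ, Matrix.diag, Matrix.vecMulVec_apply, Complex.mul_conj]
    rw [Finset.sum_congr rfl fun i _ => hdg i]
    have hsum : ∑ i, Complex.normSq (u i) = 1 := by
      have h3 : ∀ i, Complex.normSq (u i) = (n * n)⁻¹ * Complex.normSq (w i) := by
        intro i
        rw [hu]
        simp only [Pi.smul_apply, smul_eq_mul, map_mul, Complex.normSq_inv,
          Complex.normSq_ofReal]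
      rw [Finset.sum_congr rfl fun i _ => h3 i, ← Finset.mul_sum, ← hS, ← hnn,
        inv_mul_cancel₀ (by positivity)]
    rw [← Complex.ofReal_sum]
    rw [hsum]
    norm_num
  have hPρ : P * ρ = ρ := by
    ext i j
    simp only [hρ, Matrix.mul_apply, Matrix.vecMulVec_apply, Pi.star_apply]
    calc ∑ k, P i k * (u k * star (u j)) = (∑ k, P i k * u k) * star (u j) := by
          rw [Finset.sum_mul]; exact Finset.sum_congr rfl fun k _ => by ring
      _ = u i * star (u j) := by rw [show ∑ k, P i k * u k = u i from congrFun hPu i]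
  have hρP : ρ * P = ρ := by
    ext i j
    simp only [hρ, Matrix.mul_apply, Matrix.vecMulVec_apply, Pi.star_apply]
    calc ∑ k, u i * star (u k) * P k j = u i * ∑ k, star (u k) * P k j := by
          rw [Finset.mul_sum]; exact Finset.sum_congr rfl fun k _ => by ring
      _ = u i * star (u j) := by
          congr 1
          calc ∑ k, star (u k) * P k j = star (∑ k, P j k * u k) := by
                rw [star_sum]
                refine Finset.sum_congr rfl fun k _ => ?_
                rw [star_mul']
                rw [show star (P j k) = P k j from by
                  rw [← Matrix.conjTranspose_apply]; exact congrFun (congrFun hP k) j]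
                ring
            _ = star (u j) := by
                rw [show ∑ k, P j k * u k = u j from congrFun hPu j]
  exact ⟨ρ, ⟨hpsd, htrace⟩, by rw [hPρ, hρP]⟩

lemma isClosed_nonneg_complex : IsClosed {z : ℂ | 0 ≤ z} := by
  have : {z : ℂ | 0 ≤ z} = Complex.re ⁻¹' (Set.Ici 0) ∩ Complex.im ⁻¹' {0} := by
    ext z
    simp [Complex.le_def, eq_comm]
  rw [this]
  exact (isClosed_Ici.preimage Complex.continuous_re).inter
    (isClosed_singleton.preimage Complex.continuous_im)

lemma isClosed_psd : IsClosed {X : Mat d | X.PosSemidef} := by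
  have : {X : Mat d | X.PosSemidef}
      = {X : Mat d | Xᴴ = X} ∩ ⋂ x : Fin d → ℂ, {X : Mat d | 0 ≤ star x ⬝ᵥ X *ᵥ x} := by
    ext X
    simp [Matrix.posSemidef_iff_dotProduct_mulVec, Matrix.IsHermitian, Set.mem_iInter]
  rw [this]
  refine (isClosed_eq continuous_id.matrix_conjTranspose continuous_id).inter
    (isClosed_iInter fun x => ?_)
  exact isClosed_nonneg_complex.preimage
    (continuous_const.dotProduct (continuous_id.matrix_mulVec continuous_const))

lemma cont_trace_mul (Q : Mat d) : Continuous fun X : Mat d => (((Q * X).trace).re) :=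
  Complex.continuous_re.comp ((continuous_const.matrix_mul continuous_id).matrix_trace)

end Stmt17Helpers

/-- Under assumption (SP) (with `P_S ≠ 0`, `P_R ≠ 0`), the function `α` is
continuous on the pairs of a state and a state supported on `H_R`, and the infimum defining
`α₁` is attained. -/
theorem stmt17 {d m : ℕ} (hd : 1 ≤ d) (C : Fin m → Mat d) (p : ℕ) (hp : p ≤ m)
    (Ps : Mat d) (hPs : Psᴴ = Ps) (hPs2 : Ps * Ps = Ps)
    (hPsne : Ps ≠ 0) (hPr : (1 : Mat d) - Ps ≠ 0)
    (hSP : AssumpSP C p Ps) :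
    ContinuousOn (fun q : Mat d × Mat d => alphaFun C p Ps q.1 q.2)
      {q : Mat d × Mat d | IsState q.1 ∧ IsState q.2 ∧
        ((1 : Mat d) - Ps) * q.2 * ((1 : Mat d) - Ps) = q.2} ∧
    ∃ ρ ρR : Mat d, IsState ρ ∧ (Ps * ρ).trace = 1 ∧ IsState ρR ∧
      ((1 : Mat d) - Ps) * ρR * ((1 : Mat d) - Ps) = ρR ∧
      alphaFun C p Ps ρ ρR = alpha1 C p Ps := by
  have hPrH : ((1:Mat d) - Ps)ᴴ = 1 - Ps := by
    rw [Matrix.conjTranspose_sub, Matrix.conjTranspose_one, hPs]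
  have hPr2 : ((1:Mat d) - Ps) * ((1:Mat d) - Ps) = 1 - Ps := by
    rw [Matrix.mul_sub, Matrix.mul_one, Matrix.sub_mul, Matrix.one_mul, hPs2, sub_self, sub_zero]
  have hrV : ∀ j : Fin m, Continuous fun q : Mat d × Mat d => rVal C j q.1 := fun j =>
    (cont_trace_mul _).comp continuous_fst
  have hrVR : ∀ j : Fin m, Continuous fun q : Mat d × Mat d => rValR C Ps j q.2 := fun j =>
    (cont_trace_mul _).comp continuous_snd
  have hvV : ∀ j : Fin m, Continuous fun q : Mat d × Mat d => vVal C j q.1 := fun j =>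
    (Complex.continuous_re.comp
      (((continuous_const.matrix_mul continuous_id).matrix_mul
        continuous_const).matrix_trace)).comp continuous_fst
  have hvVR : ∀ j : Fin m, Continuous fun q : Mat d × Mat d => vValR C Ps j q.2 := fun j =>
    (cont_trace_mul _).comp continuous_snd
  have hcont : ContinuousOn (fun q : Mat d × Mat d => alphaFun C p Ps q.1 q.2)
      {q : Mat d × Mat d | IsState q.1 ∧ IsState q.2 ∧
        ((1 : Mat d) - Ps) * q.2 * ((1 : Mat d) - Ps) = q.2} := by
    refine ContinuousOn.congr (f := fun q : Mat d × Mat d =>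
      (1/2) * ∑ j ∈ Finset.filter (fun j : Fin m => (j : ℕ) < p) Finset.univ,
        (rVal C j q.1 - rValR C Ps j q.2) ^ 2
      + ∑ j ∈ Finset.filter (fun j : Fin m => p ≤ (j : ℕ)) Finset.univ,
        (vValR C Ps j q.2 - vVal C j q.1 +
          (vVal C j q.1 * Real.log (vVal C j q.1)
            - vVal C j q.1 * Real.log (vValR C Ps j q.2)))) ?_ ?_
    · refine ContinuousOn.add ?_ ?_
      · exact (continuous_const.mul (continuous_finset_sum _ fun j _ =>
          ((hrV j).sub (hrVR j)).pow 2)).continuousOn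
      · refine continuousOn_finset_sum _ fun j hj => ?_
        have hjp : p ≤ (j : ℕ) := (Finset.mem_filter.mp hj).2
        have hne : ∀ q : Mat d × Mat d, q ∈ {q : Mat d × Mat d | IsState q.1 ∧ IsState q.2 ∧
            ((1 : Mat d) - Ps) * q.2 * ((1 : Mat d) - Ps) = q.2} →
            vValR C Ps j q.2 ≠ 0 := fun q hq =>
          ne_of_gt (vValR_pos C p Ps hPs hPs2 hSP j hjp hq.2.1 hq.2.2)
        exact ((hvVR j).continuousOn.sub (hvV j).continuousOn).add
          (((Real.continuous_mul_log.comp (hvV j)).continuousOn).sub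
            ((hvV j).continuousOn.mul (((hvVR j).continuousOn).log hne)))
    · intro q hq
      dsimp only
      unfold alphaFun
      congr 1
      refine Finset.sum_congr rfl fun j hj => ?_
      have hjp : p ≤ (j : ℕ) := (Finset.mem_filter.mp hj).2
      by_cases hx : vVal C j q.1 = 0
      · simp [hx]
      · rw [Real.log_div hx
          (ne_of_gt (vValR_pos C p Ps hPs hPs2 hSP j hjp hq.2.1 hq.2.2))]
        ring
  refine ⟨hcont, ?_⟩
  obtain ⟨ρ0, hρ0, hproj0⟩ := exists_state_proj Ps hPs hPs2 hPsne
  obtain ⟨ρR0, hρR0, hprojR0⟩ := exists_state_proj ((1:Mat d) - Ps) hPrH hPr2 hPr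
  have hPsρ0 : (Ps * ρ0).trace = 1 := by
    have hPsρ : Ps * ρ0 = ρ0 := by
      conv_lhs => rw [← hproj0]
      rw [show Ps * (Ps * ρ0 * Ps) = (Ps * Ps) * ρ0 * Ps by simp only [Matrix.mul_assoc],
        hPs2, hproj0]
    rw [hPsρ, hρ0.2]
  set K : Set (Mat d × Mat d) := {q | IsState q.1 ∧ (Ps * q.1).trace = 1 ∧ IsState q.2 ∧
    ((1:Mat d) - Ps) * q.2 * ((1:Mat d) - Ps) = q.2} with hK
  have hKne : K.Nonempty := ⟨(ρ0, ρR0), hρ0, hPsρ0, hρR0, hprojR0⟩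
  have hKS : K ⊆ {q : Mat d × Mat d | IsState q.1 ∧ IsState q.2 ∧
      ((1 : Mat d) - Ps) * q.2 * ((1 : Mat d) - Ps) = q.2} :=
    fun q hq => ⟨hq.1, hq.2.2.1, hq.2.2.2⟩
  have h1 : IsClosed {q : Mat d × Mat d | IsState q.1} :=
    ((isClosed_psd (d := d)).inter
      (isClosed_eq continuous_id.matrix_trace continuous_const)).preimage continuous_fst
  have h2 : IsClosed {q : Mat d × Mat d | (Ps * q.1).trace = 1} :=
    isClosed_eq ((continuous_const.matrix_mul continuous_fst).matrix_trace) continuous_const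
  have h3 : IsClosed {q : Mat d × Mat d | IsState q.2} :=
    ((isClosed_psd (d := d)).inter
      (isClosed_eq continuous_id.matrix_trace continuous_const)).preimage continuous_snd
  have h4 : IsClosed {q : Mat d × Mat d |
      ((1:Mat d) - Ps) * q.2 * ((1:Mat d) - Ps) = q.2} :=
    isClosed_eq (((continuous_const.matrix_mul continuous_snd).matrix_mul continuous_const))
      continuous_snd
  have hKclosed : IsClosed K := h1.inter (h2.inter (h3.inter h4))
  have hCcomp : IsCompact ((Set.univ.pi fun _ : Fin d => Set.univ.pi fun _ : Fin d =>
      Metric.closedBall (0:ℂ) 1) ×ˢ (Set.univ.pi fun _ : Fin d => Set.univ.pi fun _ : Fin d =>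
      Metric.closedBall (0:ℂ) 1) : Set (Mat d × Mat d)) :=
    (isCompact_univ_pi fun _ => isCompact_univ_pi fun _ =>
      isCompact_closedBall (0:ℂ) 1).prod
      (isCompact_univ_pi fun _ => isCompact_univ_pi fun _ => isCompact_closedBall (0:ℂ) 1)
  have hbound : K ⊆ ((Set.univ.pi fun _ : Fin d => Set.univ.pi fun _ : Fin d =>
      Metric.closedBall (0:ℂ) 1) ×ˢ (Set.univ.pi fun _ : Fin d => Set.univ.pi fun _ : Fin d =>
      Metric.closedBall (0:ℂ) 1) : Set (Mat d × Mat d)) := by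
    rintro ⟨ρ, ρR⟩ ⟨hq1, hq2, hq3, hq4⟩
    constructor
    · intro i _
      intro j _
      rw [Metric.mem_closedBall, dist_zero_right]
      exact entry_norm_le hq1.1 hq1.2 i j
    · intro i _
      intro j _
      rw [Metric.mem_closedBall, dist_zero_right]
      exact entry_norm_le hq3.1 hq3.2 i j
  have hKcomp : IsCompact K := hCcomp.of_isClosed_subset hKclosed hbound
  obtain ⟨q, hqK, hqmin⟩ := hKcomp.exists_isMinOn hKne (hcont.mono hKS)
  refine ⟨q.1, q.2, hqK.1, hqK.2.1, hqK.2.2.1, hqK.2.2.2, ?_⟩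
  have hleast : IsLeast {a : ℝ | ∃ ρ ρR : Mat d, IsState ρ ∧ (Ps * ρ).trace = 1 ∧ IsState ρR ∧
      (1 - Ps) * ρR * (1 - Ps) = ρR ∧ a = alphaFun C p Ps ρ ρR}
      (alphaFun C p Ps q.1 q.2) := by
    constructor
    · exact ⟨q.1, q.2, hqK.1, hqK.2.1, hqK.2.2.1, hqK.2.2.2, rfl⟩
    · rintro a ⟨ρ, ρR, ha1, ha2, ha3, ha4, rfl⟩
      exact isMinOn_iff.mp hqmin (ρ, ρR) ⟨ha1, ha2, ha3, ha4⟩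
  exact (hleast.csInf_eq).symm

end
end

section
/- Let ρ ∈ M_d(ℂ) be positive semidefinite with tr ρ = 1 and let P ∈ M_d(ℂ) be an orthogonal projection. Then ‖ρ − PρP‖ ≤ 3·√(tr((I − P)ρ)), where ‖·‖ denotes the operator norm on M_d(ℂ). -/
open scoped ComplexOrder Matrix Matrix.Norms.L2Operator

noncomputable section

lemma aux_norm_le_sqrt_frob {d : ℕ} (B : Mat d) :
    ‖B‖ ≤ Real.sqrt (∑ i, ∑ j, ‖B i j‖ ^ 2) := by
  rw [Matrix.l2_opNorm_def]
  refine ContinuousLinearMap.opNorm_le_bound _ (Real.sqrt_nonneg _) fun x => ?_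
  have hBx : ∀ i, ‖Matrix.toEuclideanLin B x i‖ ^ 2
      ≤ (∑ j, ‖B i j‖ ^ 2) * ∑ j, ‖x j‖ ^ 2 := by
    intro i
    have h1 : ‖Matrix.toEuclideanLin B x i‖ ≤ ∑ j, ‖B i j‖ * ‖x j‖ := by
      calc ‖Matrix.toEuclideanLin B x i‖ = ‖∑ j, B i j * x j‖ := rfl
        _ ≤ ∑ j, ‖B i j * x j‖ := norm_sum_le _ _
        _ = ∑ j, ‖B i j‖ * ‖x j‖ := by simp [norm_mul]
    calc ‖Matrix.toEuclideanLin B x i‖ ^ 2 ≤ (∑ j, ‖B i j‖ * ‖x j‖) ^ 2 := by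
          apply pow_le_pow_left₀ (norm_nonneg _) h1
      _ ≤ (∑ j, ‖B i j‖ ^ 2) * ∑ j, ‖x j‖ ^ 2 :=
          Finset.sum_mul_sq_le_sq_mul_sq _ _ _
  calc ‖(Matrix.toEuclideanLin.trans LinearMap.toContinuousLinearMap) B x‖
      = Real.sqrt (∑ i, ‖Matrix.toEuclideanLin B x i‖ ^ 2) := by
        rw [EuclideanSpace.norm_eq]
        rfl
    _ ≤ Real.sqrt ((∑ i, ∑ j, ‖B i j‖ ^ 2) * ∑ j, ‖x j‖ ^ 2) := by
        apply Real.sqrt_le_sqrt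
        rw [Finset.sum_mul]
        exact Finset.sum_le_sum fun i _ => hBx i
    _ = Real.sqrt (∑ i, ∑ j, ‖B i j‖ ^ 2) * ‖x‖ := by
        rw [Real.sqrt_mul (by positivity), EuclideanSpace.norm_eq]

lemma aux_psd_re_trace_nonneg {d : ℕ} {A : Mat d} (hA : A.PosSemidef) :
    0 ≤ A.trace.re := by
  have h : ∀ i, 0 ≤ (A i i).re := fun i => by
    have := hA.re_dotProduct_nonneg (Pi.single i 1)
    simpa [dotProduct, Matrix.mulVec, Pi.single_apply, Finset.mul_sum] using this
  simp only [Matrix.trace, Matrix.diag, Complex.re_sum]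
  exact Finset.sum_nonneg fun i _ => h i

set_option maxHeartbeats 1000000 in
lemma aux_psd_norm_le_trace {d : ℕ} {A : Mat d} (hA : A.PosSemidef) :
    ‖A‖ ≤ A.trace.re := by
  obtain ⟨B, hH, hBB⟩ : ∃ B : Mat d, Bᴴ = B ∧ B * B = A :=
    open scoped MatrixOrder in ⟨CFC.sqrt A, (Matrix.nonneg_iff_posSemidef.mp (CFC.sqrt_nonneg A)).1, CFC.sqrt_mul_sqrt_self A hA.nonneg⟩
  have hfr : ∑ i, ∑ j, ‖B i j‖ ^ 2 = A.trace.re := by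
    rw [← hBB]
    simp only [Matrix.trace, Matrix.diag, Matrix.mul_apply, Complex.re_sum]
    refine Finset.sum_congr rfl fun i _ => Finset.sum_congr rfl fun j _ => ?_
    have : B j i = starRingEnd ℂ (B i j) := by
      have := congrFun (congrFun hH j) i
      simpa [Matrix.conjTranspose_apply] using this.symm
    rw [this, Complex.mul_conj, Complex.ofReal_re]
    rw [Complex.sq_norm]
  have h1 : ‖A‖ = ‖B‖ * ‖B‖ := by
    have h := Matrix.l2_opNorm_conjTranspose_mul_self B
    rw [hH, hBB] at h
    exact h
  have h2 := aux_norm_le_sqrt_frob B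
  have h3 : (0:ℝ) ≤ ∑ i, ∑ j, ‖B i j‖ ^ 2 :=
    Finset.sum_nonneg fun i _ => Finset.sum_nonneg fun j _ => sq_nonneg _
  have h4 : ‖B‖ * ‖B‖ ≤ ∑ i, ∑ j, ‖B i j‖ ^ 2 := by
    calc ‖B‖ * ‖B‖ ≤ Real.sqrt (∑ i, ∑ j, ‖B i j‖ ^ 2) * Real.sqrt (∑ i, ∑ j, ‖B i j‖ ^ 2) :=
          mul_le_mul h2 h2 (norm_nonneg _) (Real.sqrt_nonneg _)
      _ = ∑ i, ∑ j, ‖B i j‖ ^ 2 := Real.mul_self_sqrt h3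
  rw [h1, ← hfr]
  exact h4

set_option maxHeartbeats 1000000 in
/-- For a state `ρ` and an orthogonal projection `P`,
`‖ρ - PρP‖ ≤ 3 √(tr((I - P)ρ))` in operator norm. -/
theorem stmt18 {d : ℕ} (hd : 1 ≤ d) (ρ : Mat d) (hρ : ρ.PosSemidef) (htr : ρ.trace = 1)
    (P : Mat d) (hP : Pᴴ = P) (hP2 : P * P = P) :
    ‖ρ - P * ρ * P‖ ≤ 3 * Real.sqrt ((((1 : Mat d) - P) * ρ).trace).re := by
  classical
  set Q : Mat d := 1 - P with hQdef
  have hρH : ρᴴ = ρ := hρ.1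
  have hQH : Qᴴ = Q := by
    rw [hQdef, Matrix.conjTranspose_sub, hP]
    simp
  have hQ2 : Q * Q = Q := by
    rw [hQdef, sub_mul, one_mul, mul_sub, mul_one, hP2]
    abel
  set ε : ℝ := ((Q * ρ).trace).re with hεdef
  obtain ⟨S, hSH, hSS⟩ : ∃ S : Mat d, Sᴴ = S ∧ S * S = ρ :=
    open scoped MatrixOrder in ⟨CFC.sqrt ρ, (Matrix.nonneg_iff_posSemidef.mp (CFC.sqrt_nonneg ρ)).1, CFC.sqrt_mul_sqrt_self ρ hρ.nonneg⟩
  have hQρQ : (Q * ρ * Q).PosSemidef := by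
    have h := hρ.conjTranspose_mul_mul_same Q
    rwa [hQH] at h
  have hPρP : (P * ρ * P).PosSemidef := by
    have h := hρ.conjTranspose_mul_mul_same P
    rwa [hP] at h
  have htrQ : (Q * ρ * Q).trace = (Q * ρ).trace := by
    rw [Matrix.trace_mul_cycle, hQ2]
  have htrP : (P * ρ * P).trace = (P * ρ).trace := by
    rw [Matrix.trace_mul_cycle, hP2]
  have hε0 : 0 ≤ ε := by
    have h := aux_psd_re_trace_nonneg hQρQ
    rwa [htrQ] at h
  have hε1 : ε ≤ 1 := by
    have h0 : 0 ≤ ((P * ρ).trace).re := by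
      have h := aux_psd_re_trace_nonneg hPρP
      rwa [htrP] at h
    have hsum : (Q * ρ).trace = 1 - (P * ρ).trace := by
      rw [hQdef, sub_mul, one_mul, Matrix.trace_sub, htr]
    have : ε = 1 - ((P * ρ).trace).re := by
      rw [hεdef, hsum, Complex.sub_re, Complex.one_re]
    linarith
  have hnormQρQ : ‖Q * ρ * Q‖ ≤ ε := by
    have h := aux_psd_norm_le_trace hQρQ
    rwa [htrQ] at h
  have hconv : (S * Q)ᴴ * (S * Q) = Q * ρ * Q := by
    rw [Matrix.conjTranspose_mul, hQH, hSH, ← hSS]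
    simp only [Matrix.mul_assoc]
  have hSQsq : ‖S * Q‖ * ‖S * Q‖ ≤ ε := by
    have h := Matrix.l2_opNorm_conjTranspose_mul_self (S * Q)
    rw [hconv] at h
    linarith [hnormQρQ]
  have hSQ : ‖S * Q‖ ≤ Real.sqrt ε := by
    nlinarith [Real.sq_sqrt hε0, Real.sqrt_nonneg ε, norm_nonneg (S * Q)]
  have hS1 : ‖S‖ ≤ 1 := by
    have h := Matrix.l2_opNorm_conjTranspose_mul_self S
    rw [hSH, hSS] at h
    have hρ1 : ‖ρ‖ ≤ 1 := by
      have := aux_psd_norm_le_trace hρ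
      rwa [htr, Complex.one_re] at this
    nlinarith [norm_nonneg S]
  have hP1 : ‖P‖ ≤ 1 := by
    have h := Matrix.l2_opNorm_conjTranspose_mul_self P
    rw [hP, hP2] at h
    nlinarith [norm_nonneg P]
  have hPρQ : ‖P * ρ * Q‖ ≤ Real.sqrt ε := by
    have heq : P * ρ * Q = (P * S) * (S * Q) := by
      rw [← hSS]; simp only [Matrix.mul_assoc]
    have hPS : ‖P * S‖ ≤ 1 := by
      calc ‖P * S‖ ≤ ‖P‖ * ‖S‖ := Matrix.l2_opNorm_mul _ _
        _ ≤ 1 := by nlinarith [norm_nonneg P, norm_nonneg S]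
    calc ‖P * ρ * Q‖ = ‖(P * S) * (S * Q)‖ := by rw [heq]
      _ ≤ ‖P * S‖ * ‖S * Q‖ := Matrix.l2_opNorm_mul _ _
      _ ≤ 1 * Real.sqrt ε := by
          exact mul_le_mul hPS hSQ (norm_nonneg _) zero_le_one
      _ = Real.sqrt ε := one_mul _
  have hQρP : ‖Q * ρ * P‖ = ‖P * ρ * Q‖ := by
    have h := Matrix.l2_opNorm_conjTranspose (P * ρ * Q)
    have hc : (P * ρ * Q)ᴴ = Q * ρ * P := by
      simp only [Matrix.conjTranspose_mul, hQH, hρH, hP, Matrix.mul_assoc]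
    rw [hc] at h
    exact h
  have hdecomp : ρ - P * ρ * P = P * ρ * Q + Q * ρ * P + Q * ρ * Q := by
    rw [hQdef]
    noncomm_ring
  have hεsqrt : ε ≤ Real.sqrt ε := by
    have h1 : Real.sqrt ε ≤ 1 := Real.sqrt_le_one.mpr hε1
    nlinarith [Real.sq_sqrt hε0, Real.sqrt_nonneg ε]
  calc ‖ρ - P * ρ * P‖ = ‖P * ρ * Q + Q * ρ * P + Q * ρ * Q‖ := by rw [hdecomp]
    _ ≤ ‖P * ρ * Q‖ + ‖Q * ρ * P‖ + ‖Q * ρ * Q‖ := norm_add₃_le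
    _ ≤ Real.sqrt ε + Real.sqrt ε + ε := by
        rw [hQρP]
        exact add_le_add (add_le_add hPρQ hPρQ) hnormQρQ
    _ ≤ 3 * Real.sqrt ε := by linarith

end
end

section
/- Let ℓ_S, ℓ_R ∈ ℂ, set C' = ℓ_S·P_S + ℓ_R·P_R, and define the linear map D(X) = C' X C'* − ½(C'*C' X + X C'*C'). Then: (i) D(X) = 0 for every X ∈ M_d(ℂ) with X = P_S X P_S, and D(X) = 0 for every X with X = P_R X P_R (so adding the measurement channel C' changes neither the S-restricted nor the R-restricted generator); (ii) for every state ρ with tr(P_S ρ) = 1 and every state ρ_R supported on H_R, one has ½·(tr[(C' + C'*)ρ] − tr[(P_R C' P_R + P_R C'* P_R)ρ_R])² = 2·(Re(ℓ_S − ℓ_R))²; consequently, the quantity α₁ for the channel family augmented by the extra diffusive channel C' equals α₁ + 2·(Re(ℓ_S − ℓ_R))². -/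
open scoped ComplexOrder Matrix Matrix.Norms.L2Operator

noncomputable section

section Helpers19

lemma entry_norm_le_one {d : ℕ} {ρ : Mat d} (h : ρ.PosSemidef) (ht : ρ.trace = 1)
    (i j : Fin d) : ‖ρ i j‖ ≤ 1 := by
  obtain ⟨B, rfl⟩ : ∃ B : Mat d, ρ = Bᴴ * B := by
    open scoped MatrixOrder in exact CStarAlgebra.nonneg_iff_eq_star_mul_self.mp h.nonneg
  let u : Fin d → EuclideanSpace ℂ (Fin d) := fun k => WithLp.toLp 2 (fun l => B l k)
  have hentry : ∀ k k', (Bᴴ * B) k k' = inner ℂ (u k) (u k') := by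
    intro k k'
    simp [u, Matrix.mul_apply, Matrix.conjTranspose_apply, PiLp.inner_apply, RCLike.inner_apply, mul_comm]
  have hdiag : ∀ k, ((Bᴴ * B) k k).re = ‖u k‖^2 := by
    intro k; rw [hentry]
    exact inner_self_eq_norm_sq (𝕜 := ℂ) (u k)
  have hsum : ∑ k, ‖u k‖^2 = 1 := by
    have := congrArg Complex.re ht
    rw [Matrix.trace] at this
    simpa [Complex.re_sum, hdiag] using this
  have hle : ∀ k, ‖u k‖^2 ≤ 1 := by
    intro k
    rw [← hsum]
    exact Finset.single_le_sum (f := fun k => ‖u k‖^2) (fun _ _ => sq_nonneg _) (Finset.mem_univ k)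
  have hn : ∀ k, ‖u k‖ ≤ 1 := fun k => by
    nlinarith [hle k, norm_nonneg (u k)]
  calc ‖(Bᴴ * B) i j‖ = ‖(inner ℂ (u i) (u j) : ℂ)‖ := by rw [hentry]
    _ ≤ ‖u i‖ * ‖u j‖ := norm_inner_le_norm _ _
    _ ≤ 1 := by nlinarith [hn i, hn j, norm_nonneg (u i), norm_nonneg (u j)]

lemma trace_mul_re_le {d : ℕ} (M : Mat d) {ρ : Mat d} (h : ρ.PosSemidef) (ht : ρ.trace = 1) :
    ((M * ρ).trace).re ≤ ∑ i, ∑ k, ‖M i k‖ := by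
  calc ((M * ρ).trace).re ≤ ‖(M * ρ).trace‖ := Complex.re_le_norm _
    _ = ‖∑ i, ∑ k, M i k * ρ k i‖ := by rw [Matrix.trace]; simp [Matrix.mul_apply, Matrix.diag]
    _ ≤ ∑ i, ∑ k, ‖M i k * ρ k i‖ := by
        refine (norm_sum_le _ _).trans (Finset.sum_le_sum fun i _ => norm_sum_le _ _)
    _ ≤ ∑ i, ∑ k, ‖M i k‖ := by
        refine Finset.sum_le_sum fun i _ => Finset.sum_le_sum fun k _ => ?_
        rw [norm_mul]
        calc ‖M i k‖ * ‖ρ k i‖ ≤ ‖M i k‖ * 1 :=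
          mul_le_mul_of_nonneg_left (entry_norm_le_one h ht k i) (norm_nonneg _)
        _ = ‖M i k‖ := mul_one _

lemma trace_re_nonneg' {d : ℕ} {M : Mat d} (h : M.PosSemidef) : 0 ≤ (M.trace).re := by
  rw [Matrix.trace, Complex.re_sum]
  refine Finset.sum_nonneg fun i _ => ?_
  have := h.re_dotProduct_nonneg (Pi.single i 1)
  simpa [dotProduct, Matrix.mulVec, Pi.single_apply, Matrix.diag] using this

lemma lindblad_zero_one_apply {d : ℕ} (A X : Mat d) :
    lindblad (0 : Mat d) (fun _ : Fin 1 => A) X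
      = A * X * Aᴴ - (1/2 : ℂ) • ((Aᴴ * A) * X + X * (Aᴴ * A)) := by
  simp [lindblad, Fin.sum_univ_one, LinearMap.mulLeft_apply, LinearMap.mulRight_apply,
    mul_assoc]

lemma lind_eigen {d : ℕ} (A X : Mat d) (μ : ℂ)
    (h1 : A * X = μ • X) (h2 : Aᴴ * X = star μ • X)
    (h3 : X * A = μ • X) (h4 : X * Aᴴ = star μ • X) :
    lindblad (0 : Mat d) (fun _ : Fin 1 => A) X = 0 := by
  have e1 : A * X * Aᴴ = (μ * star μ) • X := by
    rw [h1, Matrix.smul_mul, h4, smul_smul]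
  have e2 : (Aᴴ * A) * X = (μ * star μ) • X := by
    rw [mul_assoc, h1, Matrix.mul_smul, h2, smul_smul, mul_comm]
  have e3 : X * (Aᴴ * A) = (μ * star μ) • X := by
    rw [← mul_assoc, h4, Matrix.smul_mul, h3, smul_smul, mul_comm]
  rw [lindblad_zero_one_apply, e1, e2, e3, ← add_smul, smul_smul, ← sub_smul]
  have h0 : μ * star μ - (1/2 : ℂ) * (μ * star μ + μ * star μ) = 0 := by ring
  rw [h0, zero_smul]

lemma jump_term_ge {v w K : ℝ} (hv : 0 ≤ v) (hK : v ≤ K) (hw : 0 ≤ w) :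
    -K ≤ w - v + v * Real.log (v / w) := by
  have key : 0 ≤ w + v * Real.log (v / w) := by
    rcases eq_or_lt_of_le hw with h0 | hwpos
    · rw [← h0, div_zero, Real.log_zero, mul_zero, add_zero]
    · rcases eq_or_lt_of_le hv with h0 | hvpos
      · rw [← h0, zero_mul, add_zero]; exact hw
      · have hlog : Real.log (w / v) ≤ w / v - 1 := Real.log_le_sub_one_of_pos (by positivity)
        have h7 : v * (w / v) = w := by field_simp
        have h5 : v * Real.log (w / v) ≤ w - v := by
          have h6 := mul_le_mul_of_nonneg_left hlog hv
          nlinarith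
        have h8 : Real.log (v / w) = -Real.log (w / v) := by
          rw [← Real.log_inv]; congr 1; rw [inv_div]
        rw [h8]
        nlinarith
  linarith

lemma exists_state_supported {d : ℕ} (P : Mat d) (hP2 : P * P = P) (hPh : Pᴴ = P)
    (hne : P ≠ 0) : ∃ ρ : Mat d, ρ.PosSemidef ∧ ρ.trace = 1 ∧ P * ρ = ρ ∧ ρ * P = ρ := by
  have : ∃ i j, P i j ≠ 0 := by
    by_contra h
    push_neg at h
    exact hne (by ext i j; simpa using h i j)
  obtain ⟨i0, j0, hij⟩ := this
  set y : Fin d → ℂ := fun i => P i j0 with hy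
  have hPy : P *ᵥ y = y := by
    ext i
    simp only [Matrix.mulVec, dotProduct, hy]
    have := congrFun (congrFun hP2 i) j0
    simpa [Matrix.mul_apply] using this
  set c : ℝ := ∑ k, Complex.normSq (y k) with hc
  have hcpos : 0 < c := by
    refine Finset.sum_pos' (fun k _ => Complex.normSq_nonneg _) ⟨i0, Finset.mem_univ _, ?_⟩
    simpa [Complex.normSq_pos] using hij
  set a : ℂ := ((Real.sqrt c : ℝ) : ℂ)⁻¹ with ha
  set u : Fin d → ℂ := a • y with hu
  have hPu : P *ᵥ u = u := by rw [hu, Matrix.mulVec_smul, hPy]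
  have hnormu : ∑ k, Complex.normSq (u k) = 1 := by
    have hna : Complex.normSq a = c⁻¹ := by
      rw [ha, Complex.normSq_inv, Complex.normSq_ofReal, Real.mul_self_sqrt hcpos.le]
    simp only [hu, Pi.smul_apply, smul_eq_mul, Complex.normSq_mul, hna]
    rw [← Finset.mul_sum, ← hc, inv_mul_cancel₀ hcpos.ne']
  have hPuj : ∀ j, ∑ k, star (u k) * P k j = star (u j) := by
    intro j
    calc ∑ k, star (u k) * P k j = star (∑ k, star (P k j) * u k) := by
          simp [star_sum, mul_comm]
      _ = star (u j) := by
          congr 1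
          have := congrFun hPu j
          simp only [Matrix.mulVec, dotProduct] at this
          rw [← this]
          refine Finset.sum_congr rfl fun k _ => ?_
          have hjk : star (P k j) = P j k := by
            have h := congrFun (congrFun hPh j) k
            simpa [Matrix.conjTranspose_apply] using h
          rw [hjk]
  refine ⟨Matrix.vecMulVec u (star u), ?_, ?_, ?_, ?_⟩
  · refine Matrix.PosSemidef.of_dotProduct_mulVec_nonneg ?_ ?_
    · ext i j
      simp [Matrix.conjTranspose_apply, Matrix.vecMulVec_apply, mul_comm]
    · intro x
      have hmv : Matrix.vecMulVec u (star u) *ᵥ x = (star u ⬝ᵥ x) • u := by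
        ext i
        simp only [Matrix.mulVec, dotProduct, Matrix.vecMulVec_apply, Pi.smul_apply,
          smul_eq_mul, Pi.star_apply]
        rw [Finset.sum_mul]
        exact Finset.sum_congr rfl fun k _ => by ring
      rw [hmv, dotProduct_smul]
      have h2 : star x ⬝ᵥ u = star (star u ⬝ᵥ x) := by
        simp [dotProduct, star_sum, mul_comm]
      rw [smul_eq_mul, h2]
      exact mul_star_self_nonneg _
  · rw [Matrix.trace]
    have : ∀ i, Matrix.vecMulVec u (star u) i i = (Complex.normSq (u i) : ℂ) := by
      intro i
      simp [Matrix.vecMulVec_apply, Complex.mul_conj]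
    simp only [Matrix.diag]
    rw [Finset.sum_congr rfl fun i _ => this i, ← Complex.ofReal_sum, hnormu, Complex.ofReal_one]
  · ext i j
    simp only [Matrix.mul_apply, Matrix.vecMulVec_apply, ← mul_assoc]
    rw [← Finset.sum_mul]
    congr 1
    simpa [Matrix.mulVec, dotProduct] using congrFun hPu i
  · ext i j
    simp only [Matrix.mul_apply, Matrix.vecMulVec_apply, Pi.star_apply, mul_assoc]
    rw [← Finset.mul_sum, hPuj j]

end Helpers19


/-- Adding the diffusive channel `C' = ℓ_S P_S + ℓ_R P_R` changes neither the
`S`- nor the `R`-restricted generator, its contribution to `α` is the constant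
`2 (Re(ℓ_S - ℓ_R))²`, and consequently the augmented `α₁` equals `α₁ + 2 (Re(ℓ_S - ℓ_R))²`. -/
theorem stmt19 {d m : ℕ} (hd : 1 ≤ d) (C : Fin m → Mat d) (p : ℕ) (hp : p ≤ m)
    (Ps : Mat d) (hPs : Psᴴ = Ps) (hPs2 : Ps * Ps = Ps)
    (hPsne : Ps ≠ 0) (hPr : (1 : Mat d) - Ps ≠ 0)
    (lS lR : ℂ) (C' : Mat d) (hC' : C' = lS • Ps + lR • ((1 : Mat d) - Ps)) :
    (∀ X : Mat d, Ps * X * Ps = X →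
        lindblad (0 : Mat d) (fun _ : Fin 1 => C') X = 0) ∧
    (∀ X : Mat d, ((1 : Mat d) - Ps) * X * ((1 : Mat d) - Ps) = X →
        lindblad (0 : Mat d) (fun _ : Fin 1 => C') X = 0) ∧
    (∀ ρ ρR : Mat d, IsState ρ → (Ps * ρ).trace = 1 → IsState ρR →
        ((1 : Mat d) - Ps) * ρR * ((1 : Mat d) - Ps) = ρR →
        (1/2) * ((((C' + C'ᴴ) * ρ).trace).re
            - ((((1 : Mat d) - Ps) * C' * ((1 : Mat d) - Ps)
                + ((1 : Mat d) - Ps) * C'ᴴ * ((1 : Mat d) - Ps)) * ρR).trace.re) ^ 2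
          = 2 * ((lS - lR).re) ^ 2) ∧
    sInf {a : ℝ | ∃ ρ ρR : Mat d, IsState ρ ∧ (Ps * ρ).trace = 1 ∧ IsState ρR ∧
        ((1 : Mat d) - Ps) * ρR * ((1 : Mat d) - Ps) = ρR ∧
        a = alphaFun C p Ps ρ ρR
          + (1/2) * ((((C' + C'ᴴ) * ρ).trace).re
            - ((((1 : Mat d) - Ps) * C' * ((1 : Mat d) - Ps)
                + ((1 : Mat d) - Ps) * C'ᴴ * ((1 : Mat d) - Ps)) * ρR).trace.re) ^ 2}
      = alpha1 C p Ps + 2 * ((lS - lR).re) ^ 2 := by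
  have hQh : ((1 : Mat d) - Ps)ᴴ = 1 - Ps := by
    rw [Matrix.conjTranspose_sub, Matrix.conjTranspose_one, hPs]
  have hPQ : Ps * ((1 : Mat d) - Ps) = 0 := by
    rw [Matrix.mul_sub, mul_one, hPs2, sub_self]
  have hQP : ((1 : Mat d) - Ps) * Ps = 0 := by
    rw [Matrix.sub_mul, one_mul, hPs2, sub_self]
  have hQ2 : ((1 : Mat d) - Ps) * ((1 : Mat d) - Ps) = 1 - Ps := by
    rw [Matrix.sub_mul, one_mul, Matrix.mul_sub, mul_one, hPs2, sub_self, sub_zero]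
  have hCh : C'ᴴ = star lS • Ps + star lR • ((1 : Mat d) - Ps) := by
    rw [hC', Matrix.conjTranspose_add, Matrix.conjTranspose_smul, Matrix.conjTranspose_smul,
      hPs, hQh]
  have hterm : ∀ ρ ρR : Mat d, IsState ρ → (Ps * ρ).trace = 1 → IsState ρR →
      ((1 : Mat d) - Ps) * ρR * ((1 : Mat d) - Ps) = ρR →
      (1/2) * ((((C' + C'ᴴ) * ρ).trace).re
          - ((((1 : Mat d) - Ps) * C' * ((1 : Mat d) - Ps)
              + ((1 : Mat d) - Ps) * C'ᴴ * ((1 : Mat d) - Ps)) * ρR).trace.re) ^ 2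
        = 2 * ((lS - lR).re) ^ 2 := by
    intro ρ ρR hρ hρtr hρR hρRs
    have htrQ : (((1 : Mat d) - Ps) * ρ).trace = 0 := by
      rw [Matrix.sub_mul, one_mul, Matrix.trace_sub, hρ.2, hρtr, sub_self]
    have h1 : ((C' + C'ᴴ) * ρ).trace = lS + star lS := by
      have e : (C' + C'ᴴ) * ρ = lS • (Ps * ρ) + lR • (((1 : Mat d) - Ps) * ρ)
          + (star lS • (Ps * ρ) + star lR • (((1 : Mat d) - Ps) * ρ)) := by
        rw [hCh, hC']
        simp only [Matrix.add_mul, Matrix.smul_mul]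
      rw [e]
      simp only [Matrix.trace_add, Matrix.trace_smul, hρtr, htrQ, smul_eq_mul, mul_one, mul_zero,
        add_zero]
    have hQρR : ((1 : Mat d) - Ps) * ρR = ρR := by
      have h := hρRs
      have h2 : ((1 : Mat d) - Ps) * (((1 : Mat d) - Ps) * ρR * ((1 : Mat d) - Ps))
          = ((1 : Mat d) - Ps) * ρR * ((1 : Mat d) - Ps) := by
        rw [← Matrix.mul_assoc, ← Matrix.mul_assoc, hQ2]
      rw [h] at h2
      exact h2
    have eA : ((1 : Mat d) - Ps) * C' * ((1 : Mat d) - Ps) = lR • ((1 : Mat d) - Ps) := by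
      rw [hC', Matrix.mul_add, Matrix.mul_smul, Matrix.mul_smul, hQP, smul_zero, zero_add,
        hQ2, Matrix.smul_mul, hQ2]
    have eB : ((1 : Mat d) - Ps) * C'ᴴ * ((1 : Mat d) - Ps) = star lR • ((1 : Mat d) - Ps) := by
      rw [hCh, Matrix.mul_add, Matrix.mul_smul, Matrix.mul_smul, hQP, smul_zero, zero_add,
        hQ2, Matrix.smul_mul, hQ2]
    have h2 : ((((1 : Mat d) - Ps) * C' * ((1 : Mat d) - Ps)
        + ((1 : Mat d) - Ps) * C'ᴴ * ((1 : Mat d) - Ps)) * ρR).trace = lR + star lR := by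
      rw [eA, eB, ← add_smul, Matrix.smul_mul, Matrix.trace_smul, hQρR, hρR.2, smul_eq_mul,
        mul_one]
    rw [h1, h2]
    have r1 : (lS + star lS).re = 2 * lS.re := by
      simp [Complex.add_re, Complex.conj_re]; ring
    have r2 : (lR + star lR).re = 2 * lR.re := by
      simp [Complex.add_re, Complex.conj_re]; ring
    rw [r1, r2, Complex.sub_re]
    ring
  refine ⟨?_, ?_, hterm, ?_⟩
  · intro X hX
    have hPl : Ps * X = X := by
      have h2 : Ps * (Ps * X * Ps) = Ps * X * Ps := by
        rw [← Matrix.mul_assoc, ← Matrix.mul_assoc, hPs2]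
      rw [hX] at h2
      exact h2
    have hPr' : X * Ps = X := by
      have h2 : (Ps * X * Ps) * Ps = Ps * X * Ps := by
        rw [Matrix.mul_assoc, Matrix.mul_assoc, hPs2, ← Matrix.mul_assoc]
      rw [hX] at h2
      exact h2
    have hQl : ((1 : Mat d) - Ps) * X = 0 := by
      rw [Matrix.sub_mul, one_mul, hPl, sub_self]
    have hQr : X * ((1 : Mat d) - Ps) = 0 := by
      rw [Matrix.mul_sub, mul_one, hPr', sub_self]
    exact lind_eigen C' X lS
      (by rw [hC', Matrix.add_mul, Matrix.smul_mul, Matrix.smul_mul, hPl, hQl, smul_zero,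
        add_zero])
      (by rw [hCh, Matrix.add_mul, Matrix.smul_mul, Matrix.smul_mul, hPl, hQl, smul_zero,
        add_zero])
      (by rw [hC', Matrix.mul_add, Matrix.mul_smul, Matrix.mul_smul, hPr', hQr, smul_zero,
        add_zero])
      (by rw [hCh, Matrix.mul_add, Matrix.mul_smul, Matrix.mul_smul, hPr', hQr, smul_zero,
        add_zero])
  · intro X hX
    have hQl : ((1 : Mat d) - Ps) * X = X := by
      have h2 : ((1 : Mat d) - Ps) * (((1 : Mat d) - Ps) * X * ((1 : Mat d) - Ps))
          = ((1 : Mat d) - Ps) * X * ((1 : Mat d) - Ps) := by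
        rw [← Matrix.mul_assoc, ← Matrix.mul_assoc, hQ2]
      rw [hX] at h2
      exact h2
    have hQr : X * ((1 : Mat d) - Ps) = X := by
      have h2 : (((1 : Mat d) - Ps) * X * ((1 : Mat d) - Ps)) * ((1 : Mat d) - Ps)
          = ((1 : Mat d) - Ps) * X * ((1 : Mat d) - Ps) := by
        rw [Matrix.mul_assoc, Matrix.mul_assoc, hQ2, ← Matrix.mul_assoc]
      rw [hX] at h2
      exact h2
    have hPl : Ps * X = 0 := by
      have h2 : Ps * (((1 : Mat d) - Ps) * X * ((1 : Mat d) - Ps))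
          = (Ps * ((1 : Mat d) - Ps)) * X * ((1 : Mat d) - Ps) := by
        rw [← Matrix.mul_assoc, ← Matrix.mul_assoc]
      rw [hX, hPQ, Matrix.zero_mul, Matrix.zero_mul] at h2
      exact h2
    have hPr' : X * Ps = 0 := by
      have h2 : (((1 : Mat d) - Ps) * X * ((1 : Mat d) - Ps)) * Ps
          = ((1 : Mat d) - Ps) * X * (((1 : Mat d) - Ps) * Ps) := by
        rw [Matrix.mul_assoc, Matrix.mul_assoc]
      rw [hX, hQP, Matrix.mul_zero] at h2
      exact h2
    exact lind_eigen C' X lR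
      (by rw [hC', Matrix.add_mul, Matrix.smul_mul, Matrix.smul_mul, hPl, hQl, smul_zero,
        zero_add])
      (by rw [hCh, Matrix.add_mul, Matrix.smul_mul, Matrix.smul_mul, hPl, hQl, smul_zero,
        zero_add])
      (by rw [hC', Matrix.mul_add, Matrix.mul_smul, Matrix.mul_smul, hPr', hQr, smul_zero,
        zero_add])
      (by rw [hCh, Matrix.mul_add, Matrix.mul_smul, Matrix.mul_smul, hPr', hQr, smul_zero,
        zero_add])
  · set cst : ℝ := 2 * ((lS - lR).re) ^ 2 with hcst
    set A : Set ℝ := {a : ℝ | ∃ ρ ρR : Mat d, IsState ρ ∧ (Ps * ρ).trace = 1 ∧ IsState ρR ∧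
      (1 - Ps) * ρR * (1 - Ps) = ρR ∧ a = alphaFun C p Ps ρ ρR} with hA
    have hset : {a : ℝ | ∃ ρ ρR : Mat d, IsState ρ ∧ (Ps * ρ).trace = 1 ∧ IsState ρR ∧
        ((1 : Mat d) - Ps) * ρR * ((1 : Mat d) - Ps) = ρR ∧
        a = alphaFun C p Ps ρ ρR
          + (1/2) * ((((C' + C'ᴴ) * ρ).trace).re
            - ((((1 : Mat d) - Ps) * C' * ((1 : Mat d) - Ps)
                + ((1 : Mat d) - Ps) * C'ᴴ * ((1 : Mat d) - Ps)) * ρR).trace.re) ^ 2}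
        = (fun x => x + cst) '' A := by
      ext a
      constructor
      · rintro ⟨ρ, ρR, h1, h2, h3, h4, rfl⟩
        exact ⟨alphaFun C p Ps ρ ρR, ⟨ρ, ρR, h1, h2, h3, h4, rfl⟩,
          by rw [hterm ρ ρR h1 h2 h3 h4]⟩
      · rintro ⟨b, ⟨ρ, ρR, h1, h2, h3, h4, rfl⟩, rfl⟩
        exact ⟨ρ, ρR, h1, h2, h3, h4, by rw [hterm ρ ρR h1 h2 h3 h4]⟩
    have hAne : A.Nonempty := by
      obtain ⟨ρ, hψ, htr, hl, hr⟩ := exists_state_supported Ps hPs2 hPs hPsne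
      obtain ⟨ρR, hψR, htrR, hlR, hrR⟩ := exists_state_supported ((1 : Mat d) - Ps) hQ2 hQh hPr
      exact ⟨alphaFun C p Ps ρ ρR, ρ, ρR, ⟨hψ, htr⟩, by rw [hl, htr], ⟨hψR, htrR⟩,
        by rw [hlR, hrR], rfl⟩
    have hAbdd : BddBelow A := by
      refine ⟨-(∑ j : Fin m, ∑ i, ∑ k, ‖((C j)ᴴ * C j) i k‖), ?_⟩
      rintro a ⟨ρ, ρR, hρ, hρtr, hρR, hρRs, rfl⟩
      have hS1 : 0 ≤ ∑ j ∈ Finset.filter (fun j : Fin m => (j : ℕ) < p) Finset.univ,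
          (rVal C j ρ - rValR C Ps j ρR) ^ 2 :=
        Finset.sum_nonneg fun _ _ => sq_nonneg _
      have hS2 : ∀ j ∈ Finset.filter (fun j : Fin m => p ≤ (j : ℕ)) Finset.univ,
          -(∑ i, ∑ k, ‖((C j)ᴴ * C j) i k‖)
            ≤ vValR C Ps j ρR - vVal C j ρ + vVal C j ρ
              * Real.log (vVal C j ρ / vValR C Ps j ρR) := by
        intro j _
        have hv0 : 0 ≤ vVal C j ρ :=
          trace_re_nonneg' (hρ.1.mul_mul_conjTranspose_same (C j))
        have hvK : vVal C j ρ ≤ ∑ i, ∑ k, ‖((C j)ᴴ * C j) i k‖ := by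
          unfold vVal
          rw [Matrix.trace_mul_cycle]
          exact trace_mul_re_le _ hρ.1 hρ.2
        have hw0 : 0 ≤ vValR C Ps j ρR := by
          unfold vValR
          rw [Matrix.trace_mul_cycle, Matrix.trace_mul_cycle]
          exact trace_re_nonneg' (hρR.1.mul_mul_conjTranspose_same _)
        exact jump_term_ge hv0 hvK hw0
      have hKnn : ∀ j : Fin m, 0 ≤ ∑ i, ∑ k, ‖((C j)ᴴ * C j) i k‖ := fun j =>
        Finset.sum_nonneg fun _ _ => Finset.sum_nonneg fun _ _ => norm_nonneg _
      have hsub : ∑ j ∈ Finset.filter (fun j : Fin m => p ≤ (j : ℕ)) Finset.univ,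
          (∑ i, ∑ k, ‖((C j)ᴴ * C j) i k‖) ≤ ∑ j : Fin m, ∑ i, ∑ k, ‖((C j)ᴴ * C j) i k‖ :=
        Finset.sum_le_sum_of_subset_of_nonneg (Finset.filter_subset _ _)
          (fun j _ _ => hKnn j)
      have hsum2 : -(∑ j : Fin m, ∑ i, ∑ k, ‖((C j)ᴴ * C j) i k‖)
          ≤ ∑ j ∈ Finset.filter (fun j : Fin m => p ≤ (j : ℕ)) Finset.univ,
            (vValR C Ps j ρR - vVal C j ρ + vVal C j ρ
              * Real.log (vVal C j ρ / vValR C Ps j ρR)) := by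
        calc -(∑ j : Fin m, ∑ i, ∑ k, ‖((C j)ᴴ * C j) i k‖)
            ≤ -(∑ j ∈ Finset.filter (fun j : Fin m => p ≤ (j : ℕ)) Finset.univ,
                ∑ i, ∑ k, ‖((C j)ᴴ * C j) i k‖) := by linarith
          _ = ∑ j ∈ Finset.filter (fun j : Fin m => p ≤ (j : ℕ)) Finset.univ,
              -(∑ i, ∑ k, ‖((C j)ᴴ * C j) i k‖) := by rw [Finset.sum_neg_distrib]
          _ ≤ _ := Finset.sum_le_sum hS2
      unfold alphaFun
      linarith
    have hkey := (OrderIso.addRight cst).map_csInf' hAne hAbdd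
    simp only [OrderIso.addRight_apply] at hkey
    rw [hset, ← hkey]
    rfl


end
end
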